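/- arXiv:1405.4683 — 6 statements merged into one kernel-verified Lean document; each statement's English description precedes it below -/
import Mathlib

section
/- Let A = Z[x_1,...,x_N]/(x_1^m-1,...,x_N^m-1) and θ = (x_1-1)···(x_N-1). Then the quotient ring A/(θ) is torsion free as a Z-module. -/
open MvPolynomial

namespace Stmt1Aux

variable (m : ℕ) {N : ℕ}

/-- The condition `χ_a(b)`: for every coordinate, `a i = 0` or `a i = b i % m`. -/
abbrev Cond (a : Fin N → Fin m) (b : Fin N →₀ ℕ) : Prop :=
  ∀ i, (a i : ℕ) = 0 ∨ (a i : ℕ) = b i % m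

/-- The linear functional extracting the coefficient of the basis element `E a`. -/
noncomputable def phi (a : Fin N → Fin m) (f : MvPolynomial (Fin N) ℤ) : ℤ :=
  ∑ b ∈ f.support, if Cond m a b then coeff b f else 0

/-- `E a = ∏ i, (X i ^ (a i) - 1)` (with convention `1` when `a i = 0`). -/
noncomputable def Ea (a : Fin N → Fin m) : MvPolynomial (Fin N) ℤ :=
  ∏ i, if (a i : ℕ) = 0 then 1 else X i ^ (a i : ℕ) - 1

lemma phi_zero (a : Fin N → Fin m) : phi m a 0 = 0 := by simp [phi]

lemma phi_eq_sum_of_subset (a : Fin N → Fin m) {f : MvPolynomial (Fin N) ℤ}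
    {s : Finset (Fin N →₀ ℕ)} (hs : f.support ⊆ s) :
    phi m a f = ∑ b ∈ s, if Cond m a b then coeff b f else 0 :=
  Finset.sum_subset hs (fun b _ hb => by
    rw [MvPolynomial.notMem_support_iff.mp hb]; simp)

lemma phi_add (a : Fin N → Fin m) (f g : MvPolynomial (Fin N) ℤ) :
    phi m a (f + g) = phi m a f + phi m a g := by
  classical
  rw [phi_eq_sum_of_subset m a (MvPolynomial.support_add),
    phi_eq_sum_of_subset m a (Finset.subset_union_left (s₂ := g.support)),
    phi_eq_sum_of_subset m a (Finset.subset_union_right (s₁ := f.support)),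
    ← Finset.sum_add_distrib]
  refine Finset.sum_congr rfl fun b _ => ?_
  rw [coeff_add]
  by_cases h : Cond m a b
  · rw [if_pos h, if_pos h, if_pos h]
  · rw [if_neg h, if_neg h, if_neg h, add_zero]

lemma phi_sum {ι : Type*} (a : Fin N → Fin m) (s : Finset ι)
    (g : ι → MvPolynomial (Fin N) ℤ) :
    phi m a (∑ x ∈ s, g x) = ∑ x ∈ s, phi m a (g x) := by
  classical
  induction s using Finset.induction with
  | empty => simp [phi_zero]
  | insert x s h ih => rw [Finset.sum_insert h, phi_add, ih, Finset.sum_insert h]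

lemma phi_monomial (a : Fin N → Fin m) (b : Fin N →₀ ℕ) (c : ℤ) :
    phi m a (monomial b c) = if Cond m a b then c else 0 := by
  rcases eq_or_ne c 0 with rfl | hc
  · simp [phi]
  · rw [phi, support_monomial, if_neg hc, Finset.sum_singleton]
    simp [coeff_monomial]

lemma prod_X_pow (d : Fin N → ℕ) :
    (∏ i, (X i : MvPolynomial (Fin N) ℤ) ^ d i)
      = monomial (Finsupp.equivFunOnFinite.symm d) 1 := by
  rw [monomial_eq, C_1, one_mul, Finsupp.prod_fintype _ _ (fun i => pow_zero _)]
  exact Finset.prod_congr rfl fun i _ => by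
    rfl

lemma phi_C_mul_prod (a : Fin N → Fin m) (c : ℤ) (d : Fin N → ℕ) :
    phi m a (C c * ∏ i, X i ^ d i)
      = if (∀ i, (a i : ℕ) = 0 ∨ (a i : ℕ) = d i % m) then c else 0 := by
  rw [prod_X_pow, C_mul_monomial, mul_one, phi_monomial]
  exact if_congr (forall_congr' fun i => by
    rfl) rfl rfl

lemma phi_C_mul (a : Fin N → Fin m) (c : ℤ) (f : MvPolynomial (Fin N) ℤ) :
    phi m a (C c * f) = c * phi m a f := by
  induction f using MvPolynomial.induction_on' with
  | monomial b d =>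
    rw [C_mul_monomial, phi_monomial, phi_monomial]
    by_cases h : Cond m a b <;> simp [h]
  | add p q hp hq => rw [mul_add, phi_add, hp, hq, phi_add, mul_add]

lemma phi_gen1 (a : Fin N → Fin m) (i : Fin N) (f : MvPolynomial (Fin N) ℤ) :
    phi m a ((X i ^ m - 1) * f) = 0 := by
  induction f using MvPolynomial.induction_on' with
  | monomial b c =>
    have e : (X i ^ m - 1) * monomial b c
        = monomial (Finsupp.single i m + b) c + monomial b (-c) := by
      have hn : (monomial b) (-c) = -((monomial b) c : MvPolynomial (Fin N) ℤ) := by simp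
      rw [X_pow_eq_monomial, sub_mul, one_mul, monomial_mul, one_mul, hn, ← sub_eq_add_neg]
    rw [e, phi_add, phi_monomial, phi_monomial]
    have hmod : ∀ j, (Finsupp.single i m + b) j % m = b j % m := by
      intro j
      rcases eq_or_ne j i with rfl | hj
      · simp [Finsupp.add_apply, Finsupp.single_apply, Nat.add_mod_left]
      · simp [Finsupp.add_apply, Finsupp.single_apply, if_neg (Ne.symm hj)]
    have hiff : Cond m a (Finsupp.single i m + b) ↔ Cond m a b :=
      forall_congr' fun j => by rw [hmod j]
    by_cases h : Cond m a b
    · rw [if_pos (hiff.mpr h), if_pos h]; ring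
    · rw [if_neg (fun hh => h (hiff.mp hh)), if_neg h]; ring
  | add p q hp hq => rw [mul_add, phi_add, hp, hq, add_zero]

lemma fin2_aux1 : ∀ z : Fin 2, (if z + 1 = 0 then (-1 : ℤ) else 1) = -(if z = 0 then (-1 : ℤ) else 1) := by decide

lemma fin2_aux2 : ∀ z : Fin 2, z + 1 ≠ z := by decide

lemma fin2_aux3 : ∀ z : Fin 2, z + 1 + 1 = z := by decide

lemma phi_theta (a : Fin N → Fin m) (i0 : Fin N) (h0 : (a i0 : ℕ) = 0)
    (f : MvPolynomial (Fin N) ℤ) :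
    phi m a ((∏ i, (X i - 1)) * f) = 0 := by
  classical
  induction f using MvPolynomial.induction_on' with
  | add p q hp hq => rw [mul_add, phi_add, hp, hq, add_zero]
  | monomial b c =>
    have hexp : (∏ i, (X i - 1)) * monomial b c
        = ∑ ε : Fin N → Fin 2,
            C (c * ∏ i, (if ε i = 0 then (-1 : ℤ) else 1)) *
              ∏ i, X i ^ (b i + (ε i : ℕ)) := by
      have hb : (monomial b c : MvPolynomial (Fin N) ℤ) = C c * ∏ i, X i ^ b i := by
        rw [prod_X_pow, C_mul_monomial, mul_one, Finsupp.equivFunOnFinite_symm_coe]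
      rw [hb, mul_left_comm, ← Finset.prod_mul_distrib]
      have hfac : ∀ i : Fin N,
          (X i - 1) * (X i : MvPolynomial (Fin N) ℤ) ^ b i
            = ∑ e : Fin 2, (if e = 0 then -(X i ^ b i) else X i ^ (b i + 1)) := by
        intro i
        rw [Fin.sum_univ_two, if_pos rfl, if_neg (by decide)]
        ring
      rw [Finset.prod_congr rfl fun i _ => hfac i, Finset.prod_univ_sum,
        Fintype.piFinset_univ, Finset.mul_sum]
      refine Finset.sum_congr rfl fun ε _ => ?_
      have hterm : ∀ i : Fin N,
          (if ε i = 0 then -((X i : MvPolynomial (Fin N) ℤ) ^ b i) else X i ^ (b i + 1))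
            = C (if ε i = 0 then (-1 : ℤ) else 1) * X i ^ (b i + (ε i : ℕ)) := by
        intro i
        rcases eq_or_ne (ε i) 0 with h | h
        · rw [if_pos h, if_pos h, h]
          simp
        · have h1 : ε i = 1 := by omega
          rw [if_neg h, if_neg h, h1]
          simp
      rw [Finset.prod_congr rfl fun i _ => hterm i, Finset.prod_mul_distrib, ← map_prod,
        ← mul_assoc, ← map_mul]
    rw [hexp, phi_sum]
    simp only [phi_C_mul_prod]
    have hQgen : ∀ (ε : Fin N → Fin 2) (v : Fin 2),
        ((∀ i, (a i : ℕ) = 0 ∨ (a i : ℕ) = (b i + (Function.update ε i0 v i : ℕ)) % m)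
          ↔ (∀ i, (a i : ℕ) = 0 ∨ (a i : ℕ) = (b i + (ε i : ℕ)) % m)) := by
      intro ε v
      constructor <;> intro h j
      · rcases eq_or_ne j i0 with rfl | hj
        · exact Or.inl h0
        · have := h j; rwa [Function.update_of_ne hj] at this
      · rcases eq_or_ne j i0 with rfl | hj
        · exact Or.inl h0
        · have := h j; rwa [Function.update_of_ne hj]
    have hsgn : ∀ ε : Fin N → Fin 2,
        (∏ i, (if Function.update ε i0 (ε i0 + 1) i = 0 then (-1 : ℤ) else 1))
          = -(∏ i, (if ε i = 0 then (-1 : ℤ) else 1)) := by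
      intro ε
      have hfun : ∀ j, (if Function.update ε i0 (ε i0 + 1) j = 0 then (-1 : ℤ) else 1)
          = Function.update (fun i => if ε i = 0 then (-1 : ℤ) else 1) i0
              (if ε i0 + 1 = 0 then (-1 : ℤ) else 1) j := by
        intro j
        rcases eq_or_ne j i0 with rfl | hj
        · rw [Function.update_self, Function.update_self]
        · rw [Function.update_of_ne hj, Function.update_of_ne hj]
      have h1 : (∏ i, (if Function.update ε i0 (ε i0 + 1) i = 0 then (-1 : ℤ) else 1))
          = (if ε i0 + 1 = 0 then (-1 : ℤ) else 1)
              * ∏ x ∈ Finset.univ \ {i0}, (if ε x = 0 then (-1 : ℤ) else 1) := by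
        rw [Finset.prod_congr rfl fun j _ => hfun j,
          Finset.prod_update_of_mem (Finset.mem_univ i0)]
      have h2 : (∏ i, (if ε i = 0 then (-1 : ℤ) else 1))
          = (if ε i0 = 0 then (-1 : ℤ) else 1)
              * ∏ x ∈ Finset.univ \ {i0}, (if ε x = 0 then (-1 : ℤ) else 1) := by
        rw [Finset.sdiff_singleton_eq_erase]
        exact (Finset.mul_prod_erase _ _ (Finset.mem_univ i0)).symm
      rw [h1, h2, fin2_aux1, neg_mul]
    refine Finset.sum_ninvolution (fun ε => Function.update ε i0 (ε i0 + 1)) ?_ ?_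
      (fun ε => Finset.mem_univ _) ?_
    · intro ε
      by_cases q : (∀ i, (a i : ℕ) = 0 ∨ (a i : ℕ) = (b i + (ε i : ℕ)) % m)
      · rw [if_pos q, if_pos ((hQgen ε _).mpr q), hsgn ε]
        ring
      · rw [if_neg q, if_neg (fun hh => q ((hQgen ε _).mp hh)), add_zero]
    · intro ε _ h
      have h' : Function.update ε i0 (ε i0 + 1) = ε := h
      have h2 := congrFun h' i0
      rw [Function.update_self] at h2
      exact fin2_aux2 (ε i0) h2
    · intro ε
      show Function.update (Function.update ε i0 (ε i0 + 1)) i0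
          (Function.update ε i0 (ε i0 + 1) i0 + 1) = ε
      rw [Function.update_self, fin2_aux3, Function.update_idem, Function.update_eq_self]

lemma phi_mem (a : Fin N → Fin m) (i0 : Fin N) (h0 : (a i0 : ℕ) = 0)
    {f : MvPolynomial (Fin N) ℤ}
    (hf : f ∈ Ideal.span
      (Set.range (fun i : Fin N => (X i : MvPolynomial (Fin N) ℤ) ^ m - 1)
        ∪ {∏ i, (X i - 1)})) :
    phi m a f = 0 := by
  have H : ∀ g ∈ Ideal.span
      (Set.range (fun i : Fin N => (X i : MvPolynomial (Fin N) ℤ) ^ m - 1)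
        ∪ {∏ i, (X i - 1)}), ∀ r, phi m a (r * g) = 0 := by
    intro g hg
    induction hg using Submodule.span_induction with
    | mem x hx =>
      rcases hx with ⟨i, rfl⟩ | hx
      · intro r; rw [mul_comm]; exact phi_gen1 m a i r
      · rcases Set.mem_singleton_iff.mp hx with rfl
        intro r; rw [mul_comm]; exact phi_theta m a i0 h0 r
    | zero => intro r; rw [mul_zero]; exact phi_zero m a
    | add x y hx hy ihx ihy => intro r; rw [mul_add, phi_add, ihx r, ihy r, add_zero]
    | smul z x hx ih => intro r; rw [smul_eq_mul, ← mul_assoc]; exact ih (r * z)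
  simpa using H f hf 1

lemma Ea_mem_theta (a : Fin N → Fin m) (ha : ∀ i, (a i : ℕ) ≠ 0) :
    Ea m a ∈ Ideal.span {(∏ i, (X i - 1) : MvPolynomial (Fin N) ℤ)} := by
  rw [Ideal.mem_span_singleton]
  have h : Ea m a = ∏ i, ((X i : MvPolynomial (Fin N) ℤ) ^ (a i : ℕ) - 1) :=
    Finset.prod_congr rfl fun i _ => if_neg (ha i)
  rw [h]
  exact Finset.prod_dvd_prod_of_dvd _ _ fun i _ => by
    simpa using sub_dvd_pow_sub_pow (X i : MvPolynomial (Fin N) ℤ) 1 (a i : ℕ)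

lemma mk_C_mul (J : Ideal (MvPolynomial (Fin N) ℤ)) (z : ℤ) (f : MvPolynomial (Fin N) ℤ) :
    Ideal.Quotient.mk J (C z * f) = z • Ideal.Quotient.mk J f := by
  have h : (C z : MvPolynomial (Fin N) ℤ) = (z : MvPolynomial (Fin N) ℤ) :=
    eq_intCast (C : ℤ →+* MvPolynomial (Fin N) ℤ) z
  rw [map_mul, zsmul_eq_mul, h, map_intCast]

lemma decomposition (hm : 0 < m) (J : Ideal (MvPolynomial (Fin N) ℤ))
    (hJ : ∀ i, (X i : MvPolynomial (Fin N) ℤ) ^ m - 1 ∈ J) (f : MvPolynomial (Fin N) ℤ) :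
    Ideal.Quotient.mk J f
      = ∑ a : Fin N → Fin m, phi m a f • Ideal.Quotient.mk J (Ea m a) := by
  classical
  induction f using MvPolynomial.induction_on' with
  | add p q hp hq =>
    rw [map_add, hp, hq, ← Finset.sum_add_distrib]
    exact Finset.sum_congr rfl fun a _ => by rw [phi_add, add_smul]
  | monomial b c =>
    set π := Ideal.Quotient.mk J with hπ
    have hX : ∀ i, (π (X i)) ^ m = 1 := by
      intro i
      have h1 : π ((X i) ^ m - 1) = 0 := Ideal.Quotient.eq_zero_iff_mem.mpr (hJ i)
      rw [map_sub, map_pow, map_one] at h1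
      exact sub_eq_zero.mp h1
    have hXmod : ∀ (i : Fin N) (k : ℕ), (π (X i)) ^ k = (π (X i)) ^ (k % m) := by
      intro i k
      conv_lhs => rw [← Nat.div_add_mod k m]
      rw [pow_add, pow_mul, hX, one_pow, one_mul]
    -- the per-coordinate factor
    set G : Fin N → Fin m → MvPolynomial (Fin N) ℤ ⧸ J := fun i z =>
      (if (z : ℕ) = b i % m then (π (X i)) ^ (z : ℕ) - 1 else 0)
        + (if (z : ℕ) = 0 then 1 else 0) with hG
    have hstep : ∀ i, (π (X i)) ^ (b i % m) = ∑ z : Fin m, G i z := by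
      intro i
      rw [hG]
      simp only []
      rw [Finset.sum_add_distrib]
      have h1 : (∑ z : Fin m, if (z : ℕ) = b i % m then (π (X i)) ^ (z : ℕ) - 1 else 0)
          = (π (X i)) ^ (b i % m) - 1 := by
        rw [Finset.sum_eq_single (⟨b i % m, Nat.mod_lt _ hm⟩ : Fin m)]
        · simp
        · intro z _ hz
          exact if_neg (fun hv => hz (Fin.ext hv))
        · intro h
          exact absurd (Finset.mem_univ _) h
      have h2 : (∑ z : Fin m, if (z : ℕ) = 0 then (1 : MvPolynomial (Fin N) ℤ ⧸ J) else 0)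
          = 1 := by
        rw [Finset.sum_eq_single (⟨0, hm⟩ : Fin m)]
        · simp
        · intro z _ hz
          exact if_neg (fun hv => hz (Fin.ext hv))
        · intro h
          exact absurd (Finset.mem_univ _) h
      rw [h1, h2, sub_add_cancel]
    have hb : (monomial b c : MvPolynomial (Fin N) ℤ) = C c * ∏ i, X i ^ b i := by
      rw [prod_X_pow, C_mul_monomial, mul_one, Finsupp.equivFunOnFinite_symm_coe]
    have hmono : π (monomial b c) = π (C c) * ∏ i, (π (X i)) ^ (b i % m) := by
      rw [hb, map_mul, map_prod]
      congr 1
      exact Finset.prod_congr rfl fun i _ => by rw [map_pow, hXmod]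
    rw [hmono, Finset.prod_congr rfl fun i _ => hstep i, Finset.prod_univ_sum,
      Fintype.piFinset_univ, Finset.mul_sum]
    refine Finset.sum_congr rfl fun a _ => ?_
    rw [phi_monomial]
    by_cases hc : Cond m a b
    · have hfac : ∀ i, G i (a i)
          = π (if (a i : ℕ) = 0 then 1 else X i ^ (a i : ℕ) - 1) := by
        intro i
        by_cases hz : (a i : ℕ) = 0
        · rw [if_pos hz, map_one, hG]
          simp [hz]
        · have hbm : (a i : ℕ) = b i % m := (hc i).resolve_left hz
          rw [if_neg hz, map_sub, map_pow, map_one, hG]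
          simp only []
          rw [if_pos hbm, if_neg hz, add_zero]
      rw [if_pos hc, Finset.prod_congr rfl fun i _ => hfac i, ← map_prod]
      rw [show (∏ i, (if (a i : ℕ) = 0 then 1 else X i ^ (a i : ℕ) - 1)
          : MvPolynomial (Fin N) ℤ) = Ea m a from rfl]
      rw [← map_mul, hπ, mk_C_mul]
    · rw [if_neg hc, zero_smul]
      simp only [Cond, not_forall, not_or] at hc
      obtain ⟨i, hz, hbm⟩ := hc
      have : G i (a i) = 0 := by
        rw [hG]
        simp only []
        rw [if_neg hbm, if_neg hz, add_zero]
      rw [Finset.prod_eq_zero (Finset.mem_univ i) this, mul_zero]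

end Stmt1Aux

/-- Let `A = ℤ[x_1,…,x_N]/(x_1^m-1,…,x_N^m-1)` and `θ = (x_1-1)⋯(x_N-1)`.
Then `A/(θ)` is torsion free as a `ℤ`-module. -/
theorem stmt_1 (m N : ℕ) (hm : 2 ≤ m) (hN : 1 ≤ N) :
    let I : Ideal (MvPolynomial (Fin N) ℤ) :=
      Ideal.span (Set.range fun i : Fin N => X i ^ m - 1)
    let θ : MvPolynomial (Fin N) ℤ := ∏ i, (X i - 1)
    NoZeroSMulDivisors ℤ (MvPolynomial (Fin N) ℤ ⧸ (I ⊔ Ideal.span {θ})) := by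
  intro I θ
  have hm0 : 0 < m := lt_of_lt_of_le two_pos hm
  set J : Ideal (MvPolynomial (Fin N) ℤ) := I ⊔ Ideal.span {θ} with hJdef
  have hspan : J = Ideal.span
      (Set.range (fun i : Fin N => (X i : MvPolynomial (Fin N) ℤ) ^ m - 1)
        ∪ {∏ i, (X i - 1)}) := by
    rw [hJdef, Ideal.span_union]
  constructor
  intro c x hcx
  by_cases hc : c = 0
  · exact Or.inl hc
  right
  obtain ⟨g, rfl⟩ := Ideal.Quotient.mk_surjective x
  have hXJ : ∀ i, (X i : MvPolynomial (Fin N) ℤ) ^ m - 1 ∈ J :=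
    fun i => Ideal.mem_sup_left (Ideal.subset_span ⟨i, rfl⟩)
  have hdec := Stmt1Aux.decomposition m hm0 J hXJ g
  have hmem : C c * g ∈ J := by
    rw [← Ideal.Quotient.eq_zero_iff_mem, Stmt1Aux.mk_C_mul]
    exact hcx
  have hphi : ∀ a : Fin N → Fin m, (∃ i, (a i : ℕ) = 0) → Stmt1Aux.phi m a g = 0 := by
    rintro a ⟨i0, h0⟩
    have h1 : Stmt1Aux.phi m a (C c * g) = 0 := by
      apply Stmt1Aux.phi_mem m a i0 h0
      rw [← hspan]
      exact hmem
    rw [Stmt1Aux.phi_C_mul] at h1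
    exact (mul_eq_zero.mp h1).resolve_left hc
  rw [hdec]
  apply Finset.sum_eq_zero
  intro a _
  by_cases ha : ∀ i, (a i : ℕ) ≠ 0
  · have hE : Ideal.Quotient.mk J (Stmt1Aux.Ea m a) = 0 :=
      Ideal.Quotient.eq_zero_iff_mem.mpr
        (Ideal.mem_sup_right (Stmt1Aux.Ea_mem_theta m a ha))
    rw [hE, smul_zero]
  · push_neg at ha
    rw [hphi a ha, zero_smul]
end

section
/- Let A = Z[x_1,...,x_N]/(x_1^m-1,...,x_N^m-1) and θ = (x_1-1)···(x_N-1). Then the annihilator ideal of θ in A is generated by φ(x_1),...,φ(x_N), where φ(t) = t^{m-1}+...+t+1. -/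
open MvPolynomial

private lemma geom_aux {R : Type*} [CommRing R] (x : R) (n : ℕ) :
    (x - 1) * (∑ k ∈ Finset.range n, ∑ j ∈ Finset.range k, x ^ j)
      = (∑ k ∈ Finset.range n, x ^ k) - (n : R) := by
  rw [Finset.mul_sum]
  rw [Finset.sum_congr rfl (fun k _ => by rw [mul_comm, geom_sum_mul] :
    ∀ k ∈ Finset.range n, (x - 1) * ∑ j ∈ Finset.range k, x ^ j = x ^ k - 1)]
  rw [Finset.sum_sub_distrib, Finset.sum_const, Finset.card_range]
  simp

private lemma mem_span_monic_sup_map_C {R : Type*} [CommRing R] [Nontrivial R]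
    (K : Ideal R) {g : Polynomial R} (hg : g.Monic) (F : Polynomial R) :
    F ∈ Ideal.span {g} ⊔ K.map (Polynomial.C : R →+* Polynomial R) ↔
      ∀ j, (F %ₘ g).coeff j ∈ K := by
  constructor
  · intro hF
    have hr : F %ₘ g ∈ Ideal.span {g} ⊔ K.map (Polynomial.C : R →+* Polynomial R) := by
      rw [Polynomial.modByMonic_eq_sub_mul_div F g]
      exact Submodule.sub_mem _ hF
        (Ideal.mem_sup_left (Ideal.mem_span_singleton.mpr ⟨_, rfl⟩))
    rcases Submodule.mem_sup.mp hr with ⟨a, ha, b, hb, hab⟩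
    rcases Ideal.mem_span_singleton.mp ha with ⟨q, rfl⟩
    by_cases hK : K = ⊤
    · intro j; rw [hK]; trivial
    · haveI := Ideal.Quotient.nontrivial_iff.mpr hK
      set mk := Ideal.Quotient.mk K with hmk
      have hbmap : b.map mk = 0 := by
        ext j
        simp only [Polynomial.coeff_map, Polynomial.coeff_zero]
        rw [hmk, Ideal.Quotient.eq_zero_iff_mem]
        exact Ideal.mem_map_C_iff.mp hb j
      have hgm : (g.map mk).Monic := hg.map mk
      have hdvd : g.map mk ∣ (F %ₘ g).map mk := by
        rw [← hab, Polynomial.map_add, hbmap, add_zero, Polynomial.map_mul]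
        exact ⟨q.map mk, rfl⟩
      have hdeg : ((F %ₘ g).map mk).degree < (g.map mk).degree := by
        rw [hg.degree_map]
        exact lt_of_le_of_lt Polynomial.degree_map_le
          (Polynomial.degree_modByMonic_lt F hg)
      have hzero : (F %ₘ g).map mk = 0 := by
        have h1 := (Polynomial.modByMonic_eq_zero_iff_dvd hgm).mpr hdvd
        have h2 := (Polynomial.modByMonic_eq_self_iff hgm).mpr hdeg
        rw [← h1, h2]
      intro j
      have := congrArg (fun p => Polynomial.coeff p j) hzero
      simp only [Polynomial.coeff_map, Polynomial.coeff_zero] at this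
      rwa [hmk, Ideal.Quotient.eq_zero_iff_mem] at this
  · intro h
    have hr : F %ₘ g ∈ K.map (Polynomial.C : R →+* Polynomial R) :=
      Ideal.mem_map_C_iff.mpr h
    have hdecomp : g * (F /ₘ g) + F %ₘ g = F := by
      rw [Polynomial.modByMonic_eq_sub_mul_div F g]; ring
    exact hdecomp ▸ Submodule.add_mem _
      (Ideal.mem_sup_left (Ideal.mem_span_singleton.mpr ⟨_, rfl⟩))
      (Ideal.mem_sup_right hr)

private noncomputable def Jgen (m n : ℕ) : Ideal (MvPolynomial (Fin n) ℤ) :=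
  Ideal.span (Set.range fun i : Fin n => ∑ k ∈ Finset.range m, X i ^ k)

private lemma torsion_free (m : ℕ) (hm : m ≠ 0) :
    ∀ (n : ℕ) (F : MvPolynomial (Fin n) ℤ) (k : ℤ), k ≠ 0 →
      C k * F ∈ Jgen m n → F ∈ Jgen m n := by
  intro n
  induction n with
  | zero =>
    intro F k hk h
    have hbot : Jgen m 0 = ⊥ := by
      rw [Jgen, Set.range_eq_empty, Ideal.span_empty]
    rw [hbot] at h ⊢
    rw [Ideal.mem_bot] at h ⊢
    rcases mul_eq_zero.mp h with h' | h'
    · exact absurd (by simpa using h') hk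
    · exact h'
  | succ n ih =>
    intro F k hk h
    set g : Polynomial (MvPolynomial (Fin n) ℤ) := ∑ j ∈ Finset.range m, Polynomial.X ^ j
      with hg
    have hgmonic : g.Monic := Polynomial.monic_geom_sum_X hm
    have hmap : (Jgen m (n+1)).map ((MvPolynomial.finSuccEquiv ℤ n) : MvPolynomial (Fin (n+1)) ℤ →+* _)
        = Ideal.span {g} ⊔ (Jgen m n).map (Polynomial.C : MvPolynomial (Fin n) ℤ →+* _) := by
      rw [Jgen, Ideal.map_span]
      apply le_antisymm
      · rw [Ideal.span_le]
        rintro _ ⟨_, ⟨i, rfl⟩, rfl⟩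
        beta_reduce
        simp only [RingHom.coe_coe]
        refine Fin.cases ?_ ?_ i
        · have : MvPolynomial.finSuccEquiv ℤ n (∑ k ∈ Finset.range m, X (0 : Fin (n+1)) ^ k) = g := by
            rw [map_sum]
            exact Finset.sum_congr rfl fun k _ => by
              rw [map_pow, MvPolynomial.finSuccEquiv_X_zero]
          rw [this]
          exact Ideal.mem_sup_left (Ideal.subset_span rfl)
        · intro j
          have : MvPolynomial.finSuccEquiv ℤ n (∑ k ∈ Finset.range m, X j.succ ^ k)
              = Polynomial.C (∑ k ∈ Finset.range m, X j ^ k) := by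
            rw [map_sum, map_sum]
            exact Finset.sum_congr rfl fun k _ => by
              rw [map_pow, MvPolynomial.finSuccEquiv_X_succ, map_pow]
          rw [this]
          exact Ideal.mem_sup_right
            (Ideal.mem_map_of_mem _ (Ideal.subset_span ⟨j, rfl⟩))
      · apply sup_le
        · rw [Ideal.span_le]
          rintro _ rfl
          apply Ideal.subset_span
          refine ⟨∑ k ∈ Finset.range m, X (0 : Fin (n+1)) ^ k, ⟨0, rfl⟩, ?_⟩
          simp only [RingHom.coe_coe]
          rw [map_sum]
          exact Finset.sum_congr rfl fun k _ => by
            rw [map_pow, MvPolynomial.finSuccEquiv_X_zero]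
        · rw [Jgen, Ideal.map_span, Ideal.span_le]
          rintro _ ⟨_, ⟨j, rfl⟩, rfl⟩
          beta_reduce
          apply Ideal.subset_span
          refine ⟨∑ k ∈ Finset.range m, X j.succ ^ k, ⟨j.succ, rfl⟩, ?_⟩
          simp only [RingHom.coe_coe]
          rw [map_sum, map_sum]
          exact Finset.sum_congr rfl fun k _ => by
            rw [map_pow, MvPolynomial.finSuccEquiv_X_succ, map_pow]
    have hFmem : ∀ G : MvPolynomial (Fin (n+1)) ℤ,
        G ∈ Jgen m (n+1) ↔ MvPolynomial.finSuccEquiv ℤ n G ∈ Ideal.span {g}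
          ⊔ (Jgen m n).map (Polynomial.C : MvPolynomial (Fin n) ℤ →+* _) := by
      intro G
      rw [← hmap]
      constructor
      · exact fun hG => Ideal.mem_map_of_mem _ hG
      · intro hG
        obtain ⟨x, hx, hxe⟩ := (Ideal.mem_map_iff_of_surjective _ (MvPolynomial.finSuccEquiv ℤ n).surjective).mp hG
        rwa [← (MvPolynomial.finSuccEquiv ℤ n).injective hxe]
    rw [hFmem] at h ⊢
    rw [mem_span_monic_sup_map_C _ hgmonic] at h ⊢
    intro j
    have hek : MvPolynomial.finSuccEquiv ℤ n (C k * F) = (MvPolynomial.C k : MvPolynomial (Fin n) ℤ) • MvPolynomial.finSuccEquiv ℤ n F := by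
      rw [map_mul, Polynomial.smul_eq_C_mul]
      congr 1
      simp [MvPolynomial.finSuccEquiv_apply]
    have hmod : MvPolynomial.finSuccEquiv ℤ n (C k * F) %ₘ g = (MvPolynomial.C k : MvPolynomial (Fin n) ℤ) • (MvPolynomial.finSuccEquiv ℤ n F %ₘ g) := by
      rw [hek, Polynomial.smul_modByMonic]
    have hj := h j
    rw [hmod, Polynomial.coeff_smul, smul_eq_mul] at hj
    exact ih _ k hk hj

/-- Let `A = ℤ[x_1,…,x_N]/(x_1^m-1,…,x_N^m-1)` and `θ = (x_1-1)⋯(x_N-1)`.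
Then the annihilator ideal of `θ` in `A` is generated by `φ(x_1),…,φ(x_N)`,
where `φ(t) = t^{m-1}+⋯+t+1`. -/
theorem stmt_2 (m N : ℕ) (hm : 2 ≤ m) (hN : 1 ≤ N)
    (I : Ideal (MvPolynomial (Fin N) ℤ))
    (hI : I = Ideal.span (Set.range fun i : Fin N => X i ^ m - 1))
    (θ : MvPolynomial (Fin N) ℤ) (hθ : θ = ∏ i, (X i - 1)) :
    ∀ f : MvPolynomial (Fin N) ℤ ⧸ I,
      f * Ideal.Quotient.mk I θ = 0 ↔
        f ∈ Ideal.span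
          (Set.range fun i : Fin N =>
            Ideal.Quotient.mk I (∑ k ∈ Finset.range m, X i ^ k)) := by
  intro f
  obtain ⟨F, rfl⟩ := Ideal.Quotient.mk_surjective f
  set JJ : Ideal (MvPolynomial (Fin N) ℤ) :=
    Ideal.span (Set.range fun i : Fin N => ∑ k ∈ Finset.range m, X i ^ k) with hJJ
  have hIJ : I ≤ JJ := by
    rw [hI, Ideal.span_le]
    rintro _ ⟨i, rfl⟩
    beta_reduce
    have hgs : X (R := ℤ) (σ := Fin N) i ^ m - 1
        = (∑ k ∈ Finset.range m, X i ^ k) * (X i - 1) := (geom_sum_mul _ m).symm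
    rw [hgs]
    exact Ideal.mul_mem_right _ _ (Ideal.subset_span ⟨i, rfl⟩)
  have hRHS : Ideal.span (Set.range fun i : Fin N =>
        Ideal.Quotient.mk I (∑ k ∈ Finset.range m, X i ^ k))
      = JJ.map (Ideal.Quotient.mk I) := by
    rw [hJJ, Ideal.map_span, ← Set.range_comp]
    rfl
  rw [hRHS, ← map_mul, Ideal.Quotient.eq_zero_iff_mem, Ideal.mem_quotient_iff_mem hIJ]
  constructor
  · intro h
    have single : ∀ (a : Fin N) (G : MvPolynomial (Fin N) ℤ),
        (X a - 1) * G ∈ JJ → MvPolynomial.C ((m : ℕ) : ℤ) * G ∈ JJ := by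
      intro a G hG
      have hm' : (MvPolynomial.C ((m : ℕ) : ℤ) : MvPolynomial (Fin N) ℤ)
          = (∑ k ∈ Finset.range m, X a ^ k)
            - (X a - 1) * (∑ k ∈ Finset.range m, ∑ j ∈ Finset.range k, X a ^ j) := by
        rw [geom_aux (X a) m, map_natCast]
        ring
      have hrw : MvPolynomial.C ((m : ℕ) : ℤ) * G
          = (∑ k ∈ Finset.range m, X a ^ k) * G
            - (∑ k ∈ Finset.range m, ∑ j ∈ Finset.range k, X a ^ j) * ((X a - 1) * G) := by
        rw [hm']; ring
      rw [hrw]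
      exact Submodule.sub_mem _
        (Ideal.mul_mem_right _ _ (Ideal.subset_span ⟨a, rfl⟩))
        (Ideal.mul_mem_left _ _ hG)
    have key : ∀ s : Finset (Fin N), ∀ G : MvPolynomial (Fin N) ℤ,
        (∏ i ∈ s, (X i - 1)) * G ∈ JJ
          → MvPolynomial.C (((m : ℕ) : ℤ) ^ s.card) * G ∈ JJ := by
      intro s
      induction s using Finset.induction_on with
      | empty => intro G hG; simpa using hG
      | @insert a s ha ih2 =>
        intro G hG
        rw [Finset.prod_insert ha, mul_assoc] at hG
        have h2 := single a _ hG
        have h3 : (∏ i ∈ s, (X i - 1)) * (MvPolynomial.C ((m : ℕ) : ℤ) * G) ∈ JJ := by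
          rwa [show (∏ i ∈ s, (X i - 1)) * (MvPolynomial.C ((m : ℕ) : ℤ) * G)
            = MvPolynomial.C ((m : ℕ) : ℤ) * ((∏ i ∈ s, (X i - 1)) * G) from by ring]
        have h4 := ih2 _ h3
        rw [Finset.card_insert_of_notMem ha]
        rwa [show MvPolynomial.C (((m : ℕ) : ℤ) ^ (s.card + 1)) * G
          = MvPolynomial.C (((m : ℕ) : ℤ) ^ s.card)
              * (MvPolynomial.C ((m : ℕ) : ℤ) * G) from by
            rw [pow_succ, map_mul]; ring]
    have h1 : (∏ i, (X i - 1)) * F ∈ JJ := by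
      have := hIJ h
      rwa [hθ, mul_comm] at this
    have h2 := key Finset.univ F h1
    rw [Finset.card_univ, Fintype.card_fin] at h2
    exact torsion_free m (by omega) N F _ (pow_ne_zero _ (by exact_mod_cast (by omega : m ≠ 0))) h2
  · intro hF
    have hcolon : JJ ≤ I.colon (Ideal.span {θ}) := by
      rw [hJJ, Ideal.span_le]
      rintro _ ⟨i, rfl⟩
      beta_reduce
      rw [SetLike.mem_coe, Ideal.mem_colon_span_singleton, hθ,
        ← Finset.mul_prod_erase Finset.univ _ (Finset.mem_univ i), ← mul_assoc, geom_sum_mul]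
      exact Ideal.mul_mem_right _ _ (hI ▸ Ideal.subset_span ⟨i, rfl⟩)
    have := hcolon hF
    rwa [Ideal.mem_colon_span_singleton] at this
end

section
/- Let A = Z[x_1,...,x_N]/(x_1^m-1,...,x_N^m-1) and θ = (x_1-1)···(x_N-1). The Z-module A/(θ) is free with rank equal to the number of N-tuples (a_1,...,a_N) of m-th roots of unity in C such that a_i = 1 for at least one index i, i.e. rank A/(θ) = m^N - (m-1)^N. -/
open MvPolynomial


open Finset

lemma card_filter_exists {α : Type*} [DecidableEq α] (n : ℕ) (t : Finset α) (z : α) (hz : z ∈ t) :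
    ((Fintype.piFinset (fun _ : Fin n => t)).filter (fun f => ∃ i, f i = z)).card
      = t.card ^ n - (t.card - 1) ^ n := by
  classical
  have hcompl : (Fintype.piFinset (fun _ : Fin n => t)).filter (fun f => ¬ ∃ i, f i = z)
      = Fintype.piFinset (fun _ : Fin n => t.erase z) := by
    ext f
    simp only [Finset.mem_filter, Fintype.mem_piFinset, Finset.mem_erase, not_exists]
    constructor
    · rintro ⟨h1, h2⟩ i; exact ⟨h2 i, h1 i⟩
    · intro h; exact ⟨fun i => (h i).2, fun i => (h i).1⟩
  have htot := Finset.card_filter_add_card_filter_not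
    (s := Fintype.piFinset (fun _ : Fin n => t)) (p := fun f => ∃ i, f i = z)
  rw [hcompl] at htot
  have h1 : (Fintype.piFinset (fun _ : Fin n => t)).card = t.card ^ n := by
    simp [Fintype.card_piFinset]
  have h2 : (Fintype.piFinset (fun _ : Fin n => t.erase z)).card = (t.card - 1) ^ n := by
    simp [Fintype.card_piFinset, Finset.card_erase_of_mem hz]
  rw [h1, h2] at htot
  exact Nat.eq_sub_of_add_eq htot

lemma core_span {R B : Type*} [CommRing R] [CommRing B] [Algebra R B]
    (m N : ℕ) (hm : 2 ≤ m) (hN : 1 ≤ N) (y : Fin N → B)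
    (hy1 : ∀ i, y i ^ m = 1) (hy2 : ∏ i, (y i - 1) = 0) (d : Fin N → ℕ) :
    (∏ i, y i ^ d i) ∈ Submodule.span R
      (Set.range fun g : {f : Fin N → Fin m // ∃ i, (f i : ℕ) = 0} =>
        ∏ i, y i ^ (g.1 i : ℕ)) := by
  classical
  haveI : NeZero m := ⟨by omega⟩
  have hred : (∏ i, y i ^ d i) = ∏ i, y i ^ (d i % m) := by
    refine Finset.prod_congr rfl fun i _ => ?_
    conv_lhs => rw [← Nat.div_add_mod (d i) m]
    rw [pow_add, pow_mul, hy1, one_pow, one_mul]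
  rw [hred]
  have hlt : ∀ i, d i % m < m := fun i => Nat.mod_lt _ (by omega)
  -- strong induction on the total degree
  suffices H : ∀ n : ℕ, ∀ d : Fin N → ℕ, (∑ i, d i) = n → (∀ i, d i < m) →
      (∏ i, y i ^ d i) ∈ Submodule.span R
        (Set.range fun g : {f : Fin N → Fin m // ∃ i, (f i : ℕ) = 0} =>
          ∏ i, y i ^ (g.1 i : ℕ)) by
    exact H _ (fun i => d i % m) rfl hlt
  intro n
  induction n using Nat.strong_induction_on with
  | _ n IH =>
    intro d hsum hdlt
    by_cases hex : ∃ i, d i = 0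
    · refine Submodule.subset_span ?_
      refine ⟨⟨fun i => ⟨d i, hdlt i⟩, ?_⟩, rfl⟩
      obtain ⟨i, hi⟩ := hex
      exact ⟨i, by simp [hi]⟩
    · push_neg at hex
      set e : Fin N → ℕ := fun i => d i - 1 with he
      have hde : ∀ i, d i = e i + 1 := fun i => by
        simp only [he]; have := hex i; omega
      have key : (0 : B) = ∑ t ∈ (univ : Finset (Fin N)).powerset,
          (∏ i ∈ t, y i ^ d i) * ∏ i ∈ univ \ t, (-(y i ^ e i)) := by
        rw [← Finset.prod_add]
        have : ∀ i ∈ (univ : Finset (Fin N)), y i ^ d i + -(y i ^ e i)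
            = y i ^ e i * (y i - 1) := by
          intro i _
          rw [hde i, pow_succ]
          ring
        rw [Finset.prod_congr rfl this, Finset.prod_mul_distrib, hy2, mul_zero]
      rw [← Finset.add_sum_erase _ _ (Finset.mem_powerset_self (univ : Finset (Fin N)))] at key
      have hself : (∏ i ∈ (univ : Finset (Fin N)), y i ^ d i) *
          ∏ i ∈ univ \ univ, (-(y i ^ e i)) = ∏ i, y i ^ d i := by
        rw [Finset.sdiff_self, Finset.prod_empty, mul_one]
      rw [hself] at key
      have key2 : (∏ i, y i ^ d i) = - ∑ t ∈ ((univ : Finset (Fin N)).powerset).erase univ,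
          (∏ i ∈ t, y i ^ d i) * ∏ i ∈ univ \ t, (-(y i ^ e i)) := by
        exact eq_neg_of_add_eq_zero_left key.symm
      rw [key2]
      refine Submodule.neg_mem _ (Submodule.sum_mem _ ?_)
      intro t ht
      obtain ⟨htne, htsub⟩ := Finset.mem_erase.mp ht
      have htsub' : t ⊆ univ := Finset.mem_powerset.mp htsub
      set c : Fin N → ℕ := fun i => if i ∈ t then d i else e i with hc
      have hterm : (∏ i ∈ t, y i ^ d i) * ∏ i ∈ univ \ t, (-(y i ^ e i))
          = (-1 : B) ^ (univ \ t).card * ∏ i, y i ^ c i := by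
        have h1 : ∏ i ∈ univ \ t, (-(y i ^ e i))
            = (-1 : B) ^ (univ \ t).card * ∏ i ∈ univ \ t, y i ^ e i := by
          rw [← Finset.prod_const, ← Finset.prod_mul_distrib]
          exact Finset.prod_congr rfl fun i _ => by ring
        rw [h1]
        have h2 : ∏ i ∈ t, y i ^ d i = ∏ i ∈ t, y i ^ c i :=
          Finset.prod_congr rfl fun i hi => by rw [hc]; simp [hi]
        have h3 : ∏ i ∈ univ \ t, y i ^ e i = ∏ i ∈ univ \ t, y i ^ c i :=
          Finset.prod_congr rfl fun i hi => by
            rw [hc]; simp [(Finset.mem_sdiff.mp hi).2]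
        rw [h2, h3, ← Finset.prod_sdiff htsub']
        ring
      rw [hterm]
      have hclt : ∀ i, c i < m := by
        intro i; rw [hc]; dsimp only
        split
        · exact hdlt i
        · simp only [he]; have := hdlt i; omega
      have hcsum : (∑ i, c i) < n := by
        rw [← hsum]
        refine Finset.sum_lt_sum (fun i _ => ?_) ?_
        · rw [hc]; dsimp only; split
          · exact le_refl _
          · simp only [he]; omega
        · obtain ⟨j, hj⟩ : ∃ j, j ∉ t := by
            by_contra h
            push_neg at h
            exact htne (Finset.eq_univ_iff_forall.mpr h)
          refine ⟨j, Finset.mem_univ j, ?_⟩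
          rw [hc]; simp only [hj, if_false, he]
          have := hex j; omega
      have hmem := IH _ hcsum c rfl hclt
      rcases Nat.even_or_odd (univ \ t).card with hpar | hpar
      · rw [hpar.neg_one_pow, one_mul]; exact hmem
      · rw [hpar.neg_one_pow, neg_one_mul]
        exact Submodule.neg_mem _ hmem
open Finset

lemma fun_adjoin_top (N : ℕ) (S : Finset (Fin N → ℂ)) :
    (Algebra.adjoin ℂ (Set.range fun i : Fin N => (fun a : ↥S => (a : Fin N → ℂ) i)) : Subalgebra ℂ (↥S → ℂ)) = ⊤ := by
  classical
  set y : Fin N → (↥S → ℂ) := fun i => fun a => (a : Fin N → ℂ) i with hy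
  set A' := Algebra.adjoin ℂ (Set.range y) with hA'
  rw [eq_top_iff]
  intro f _
  -- indicator functions
  have hδ : ∀ b : ↥S, ∃ δ : ↥S → ℂ, δ ∈ A' ∧ δ b = 1 ∧ ∀ a : ↥S, a ≠ b → δ a = 0 := by
    intro b
    have hg : ∀ a : ↥S, ∃ g : ↥S → ℂ, g ∈ A' ∧ g b = 1 ∧ (a ≠ b → g a = 0) := by
      intro a
      by_cases hab : a = b
      · exact ⟨1, Subalgebra.one_mem _, rfl, fun h => absurd hab h⟩
      have : (a : Fin N → ℂ) ≠ (b : Fin N → ℂ) := fun h => hab (Subtype.ext h)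
      obtain ⟨i, hi⟩ := Function.ne_iff.mp this
      refine ⟨((b : Fin N → ℂ) i - (a : Fin N → ℂ) i)⁻¹ •
        (y i - algebraMap ℂ (↥S → ℂ) ((a : Fin N → ℂ) i)), ?_, ?_, ?_⟩
      · exact Subalgebra.smul_mem _ (Subalgebra.sub_mem _
          (Algebra.subset_adjoin (Set.mem_range_self i)) (Subalgebra.algebraMap_mem _ _)) _
      · simp only [Pi.smul_apply, Pi.sub_apply, hy, smul_eq_mul]
        rw [show (algebraMap ℂ (↥S → ℂ) ((a : Fin N → ℂ) i)) b = (a : Fin N → ℂ) i from rfl]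
        rw [inv_mul_cancel₀ (sub_ne_zero.mpr (fun h => hi h.symm))]
      · intro _
        simp only [Pi.smul_apply, Pi.sub_apply, hy, smul_eq_mul]
        rw [show (algebraMap ℂ (↥S → ℂ) ((a : Fin N → ℂ) i)) a = (a : Fin N → ℂ) i from rfl]
        rw [sub_self, mul_zero]
    choose g hgA hgb hga using hg
    refine ⟨∏ a ∈ (univ : Finset ↥S).erase b, g a, ?_, ?_, ?_⟩
    · exact Subalgebra.prod_mem _ (fun a _ => hgA a)
    · rw [Finset.prod_apply]
      exact Finset.prod_eq_one (fun a _ => hgb a)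
    · intro a hab
      rw [Finset.prod_apply]
      refine Finset.prod_eq_zero (Finset.mem_erase.mpr ⟨hab, Finset.mem_univ a⟩) ?_
      exact hga a hab
  choose δ hδA hδ1 hδ0 using hδ
  have hf : f = ∑ b : ↥S, f b • δ b := by
    funext c
    rw [Finset.sum_apply]
    rw [Finset.sum_eq_single c]
    · simp [hδ1 c]
    · intro b _ hbc
      simp [Pi.smul_apply, hδ0 b c (Ne.symm hbc)]
    · intro h; exact absurd (Finset.mem_univ c) h
  rw [hf]
  exact Subalgebra.sum_mem _ (fun b _ => Subalgebra.smul_mem _ (hδA b) _)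
open Finset

lemma adjoin_le_span_mon {R B : Type*} [CommRing R] [CommRing B] [Algebra R B]
    (N : ℕ) (y : Fin N → B) :
    Subalgebra.toSubmodule (Algebra.adjoin R (Set.range y)) ≤
      Submodule.span R (Set.range fun d : Fin N → ℕ => ∏ i, y i ^ d i) := by
  classical
  rw [Algebra.adjoin_eq_span]
  refine Submodule.span_le.mpr ?_
  have hM : Submonoid.closure (Set.range y) ≤
      { carrier := Set.range fun d : Fin N → ℕ => ∏ i, y i ^ d i
        mul_mem' := by
          rintro _ _ ⟨d, rfl⟩ ⟨e, rfl⟩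
          exact ⟨fun i => d i + e i, by simp [pow_add, Finset.prod_mul_distrib]⟩
        one_mem' := ⟨fun _ => 0, by simp⟩ } := by
    refine Submonoid.closure_le.mpr ?_
    rintro _ ⟨i, rfl⟩
    refine ⟨fun j => if j = i then 1 else 0, ?_⟩
    have h1 : ∀ j ∈ (univ : Finset (Fin N)),
        y j ^ (if j = i then 1 else 0) = if j = i then y j else 1 := by
      intro j _; split <;> simp
    simp only
    rw [Finset.prod_congr rfl h1, Finset.prod_ite_eq' univ i y, if_pos (Finset.mem_univ i)]
  intro x hx
  exact Submodule.subset_span (hM hx)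

lemma monomial_one_eq {N : ℕ} (d : Fin N →₀ ℕ) :
    (MvPolynomial.monomial d (1:ℤ)) = ∏ i, MvPolynomial.X i ^ d i := by
  rw [← MvPolynomial.prod_X_pow_eq_monomial]
  refine Finset.prod_subset (Finset.subset_univ _) (fun x _ hx => ?_)
  rw [Finsupp.notMem_support_iff.mp hx, pow_zero]


/-- Let `A = ℤ[x_1,…,x_N]/(x_1^m-1,…,x_N^m-1)` and `θ = (x_1-1)⋯(x_N-1)`.
The `ℤ`-module `A/(θ)` is free, of rank equal to the number of `N`-tuples of
`m`-th roots of unity in `ℂ` having at least one coordinate equal to `1`,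
i.e. of rank `m^N - (m-1)^N`. -/
theorem stmt_3 (m N : ℕ) (hm : 2 ≤ m) (hN : 1 ≤ N)
    (I : Ideal (MvPolynomial (Fin N) ℤ))
    (hI : I = Ideal.span (Set.range fun i : Fin N => X i ^ m - 1))
    (θ : MvPolynomial (Fin N) ℤ) (hθ : θ = ∏ i, (X i - 1)) :
    Module.Free ℤ (MvPolynomial (Fin N) ℤ ⧸ (I ⊔ Ideal.span {θ})) ∧
    Module.finrank ℤ (MvPolynomial (Fin N) ℤ ⧸ (I ⊔ Ideal.span {θ})) =
      Set.ncard {a : Fin N → ℂ | (∀ i, a i ^ m = 1) ∧ ∃ i, a i = 1} ∧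
    Set.ncard {a : Fin N → ℂ | (∀ i, a i ^ m = 1) ∧ ∃ i, a i = 1} =
      m ^ N - (m - 1) ^ N := by
  classical
  have hm0 : 0 < m := by omega
  set J : Ideal (MvPolynomial (Fin N) ℤ) := I ⊔ Ideal.span {θ} with hJ
  set mkQ := Ideal.Quotient.mk J with hmkQ
  -- the relations in the quotient
  have hXmJ : ∀ i : Fin N, X i ^ m - 1 ∈ J := by
    intro i
    refine Ideal.mem_sup_left ?_
    rw [hI]
    exact Ideal.subset_span ⟨i, rfl⟩
  have hθJ : θ ∈ J := Ideal.mem_sup_right (Ideal.mem_span_singleton_self θ)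
  have hy1Q : ∀ i, mkQ (X i) ^ m = 1 := by
    intro i
    rw [← map_pow, ← map_one mkQ]
    exact Ideal.Quotient.eq.mpr (hXmJ i)
  have hy2Q : ∏ i, (mkQ (X i) - 1) = 0 := by
    have : ∀ i ∈ (Finset.univ : Finset (Fin N)), mkQ (X i) - 1 = mkQ (X i - 1) := by
      intro i _; rw [map_sub, map_one]
    rw [Finset.prod_congr rfl this, ← map_prod, ← hθ]
    exact Ideal.Quotient.eq_zero_iff_mem.mpr hθJ
  -- the good index type
  set fam : {f : Fin N → Fin m // ∃ i, (f i : ℕ) = 0} →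
      MvPolynomial (Fin N) ℤ ⧸ J := fun g => ∏ i, mkQ (X i) ^ (g.1 i : ℕ) with hfam
  -- spanning over ℤ
  have hspanQ : ⊤ ≤ Submodule.span ℤ (Set.range fam) := by
    intro z _
    obtain ⟨p, rfl⟩ := Ideal.Quotient.mk_surjective z
    have hps : mkQ p = ∑ v ∈ p.support, mkQ (monomial v (coeff v p)) := by
      conv_lhs => rw [MvPolynomial.as_sum p]
      rw [map_sum]
    rw [hps]
    refine Submodule.sum_mem _ (fun v hv => ?_)
    have h1 : (monomial v) (coeff v p) = (coeff v p) • (monomial v (1:ℤ)) := by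
      rw [MvPolynomial.smul_monomial, smul_eq_mul, mul_one]
    rw [h1, map_zsmul]
    refine Submodule.smul_mem _ _ ?_
    rw [monomial_one_eq, map_prod]
    simp only [map_pow]
    exact core_span m N hm hN (fun i => mkQ (X i)) hy1Q hy2Q (fun i => v i)
  -- the finite set of root tuples
  set Sfin : Finset (Fin N → ℂ) :=
    (Fintype.piFinset fun _ : Fin N => Polynomial.nthRootsFinset m (1 : ℂ)).filter
      (fun a => ∃ i, a i = 1) with hSfin
  have hSmem : ∀ a : ↥Sfin, (∀ i, (a : Fin N → ℂ) i ^ m = 1) ∧ ∃ i, (a : Fin N → ℂ) i = 1 := by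
    intro a
    obtain ⟨h1, h2⟩ := Finset.mem_filter.mp a.2
    exact ⟨fun i => (Polynomial.mem_nthRootsFinset hm0 (1 : ℂ)).mp (Fintype.mem_piFinset.mp h1 i), h2⟩
  set yB : Fin N → (↥Sfin → ℂ) := fun i => fun a => (a : Fin N → ℂ) i with hyB
  have hy1B : ∀ i, yB i ^ m = 1 := by
    intro i; funext a
    exact (hSmem a).1 i
  have hy2B : ∏ i, (yB i - 1) = 0 := by
    funext a
    rw [Finset.prod_apply]
    obtain ⟨i, hi⟩ := (hSmem a).2
    refine Finset.prod_eq_zero (Finset.mem_univ i) ?_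
    simp [hyB, hi]
  set fam' : {f : Fin N → Fin m // ∃ i, (f i : ℕ) = 0} →
      (↥Sfin → ℂ) := fun g => ∏ i, yB i ^ (g.1 i : ℕ) with hfam'
  -- spanning over ℂ
  have hspanB : ⊤ ≤ Submodule.span ℂ (Set.range fam') := by
    intro x _
    have htop : Algebra.adjoin ℂ (Set.range yB) = ⊤ := fun_adjoin_top N Sfin
    have hx : x ∈ Subalgebra.toSubmodule (Algebra.adjoin ℂ (Set.range yB)) :=
      (Subalgebra.mem_toSubmodule _).mpr (htop.ge Algebra.mem_top)
    have hx2 := adjoin_le_span_mon N yB hx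
    have hle : Submodule.span ℂ (Set.range fun d : Fin N → ℕ => ∏ i, yB i ^ d i) ≤
        Submodule.span ℂ (Set.range fam') := by
      refine Submodule.span_le.mpr ?_
      rintro _ ⟨d, rfl⟩
      exact core_span m N hm hN yB hy1B hy2B d
    exact hle hx2
  -- cardinalities
  have cardS : Sfin.card = m ^ N - (m - 1) ^ N := by
    have h1 : (1 : ℂ) ∈ Polynomial.nthRootsFinset m (1 : ℂ) :=
      (Polynomial.mem_nthRootsFinset hm0 (1 : ℂ)).mpr (one_pow m)
    have := card_filter_exists N (Polynomial.nthRootsFinset m (1 : ℂ)) 1 h1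
    rwa [(Complex.isPrimitiveRoot_exp m hm0.ne').card_nthRootsFinset] at this
  have cardGT : Fintype.card {f : Fin N → Fin m // ∃ i, (f i : ℕ) = 0}
      = m ^ N - (m - 1) ^ N := by
    haveI : NeZero m := ⟨by omega⟩
    rw [Fintype.card_subtype]
    have hfe : (Finset.univ.filter fun f : Fin N → Fin m => ∃ i, (f i : ℕ) = 0)
        = (Fintype.piFinset fun _ : Fin N => (Finset.univ : Finset (Fin m))).filter
            (fun f => ∃ i, f i = 0) := by
      rw [Fintype.piFinset_univ]
      refine Finset.filter_congr (fun f _ => ?_)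
      exact exists_congr fun i => by rw [Fin.ext_iff, Fin.val_zero]
    rw [hfe, card_filter_exists N (Finset.univ : Finset (Fin m)) 0 (Finset.mem_univ _)]
    simp
  have hSeq : {a : Fin N → ℂ | (∀ i, a i ^ m = 1) ∧ ∃ i, a i = 1} = (↑Sfin : Set (Fin N → ℂ)) := by
    ext a
    simp only [Set.mem_setOf_eq, hSfin, Finset.coe_filter, Finset.mem_coe,
      Fintype.mem_piFinset, Set.mem_setOf_eq, Polynomial.mem_nthRootsFinset hm0 (1 : ℂ)]
  have hncard : Set.ncard {a : Fin N → ℂ | (∀ i, a i ^ m = 1) ∧ ∃ i, a i = 1}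
      = m ^ N - (m - 1) ^ N := by
    rw [hSeq, Set.ncard_coe_finset, cardS]
  -- evaluation homomorphism
  set Φ : MvPolynomial (Fin N) ℤ →+* (↥Sfin → ℂ) :=
    Pi.ringHom (fun a => MvPolynomial.eval₂Hom (Int.castRingHom ℂ) ((a : Fin N → ℂ))) with hΦ
  have hker : J ≤ RingHom.ker Φ := by
    rw [hJ]
    refine sup_le ?_ ?_
    · rw [hI, Ideal.span_le]
      rintro q ⟨i, rfl⟩
      rw [SetLike.mem_coe, RingHom.mem_ker]
      funext a
      show MvPolynomial.eval₂Hom (Int.castRingHom ℂ) ((a : Fin N → ℂ)) (X i ^ m - 1) = 0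
      rw [map_sub, map_pow, map_one, eval₂Hom_X']
      rw [(hSmem a).1 i, sub_self]
    · rw [Ideal.span_le, Set.singleton_subset_iff, SetLike.mem_coe, RingHom.mem_ker]
      funext a
      show MvPolynomial.eval₂Hom (Int.castRingHom ℂ) ((a : Fin N → ℂ)) θ = 0
      rw [hθ, map_prod]
      obtain ⟨i, hi⟩ := (hSmem a).2
      refine Finset.prod_eq_zero (Finset.mem_univ i) ?_
      rw [map_sub, map_one, eval₂Hom_X', hi, sub_self]
  set ψ : (MvPolynomial (Fin N) ℤ ⧸ J) →+* (↥Sfin → ℂ) :=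
    Ideal.Quotient.lift J Φ (fun p hp => RingHom.mem_ker.mp (hker hp)) with hψ
  have hψmk : ∀ p, ψ (mkQ p) = Φ p := fun p => Ideal.Quotient.lift_mk J _ _
  have hΦX : ∀ i, Φ (X i) = yB i := by
    intro i
    funext a
    show MvPolynomial.eval₂Hom (Int.castRingHom ℂ) ((a : Fin N → ℂ)) (X i) = _
    rw [eval₂Hom_X']
  have hcomp : ∀ g, ψ (fam g) = fam' g := by
    intro g
    rw [hfam, hfam']
    simp only [map_prod, map_pow, hψmk, hΦX]
  -- linear independence
  have hcardeq : Fintype.card {f : Fin N → Fin m // ∃ i, (f i : ℕ) = 0}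
      = Module.finrank ℂ (↥Sfin → ℂ) := by
    rw [Module.finrank_pi, Fintype.card_coe, cardGT, cardS]
  have liB : LinearIndependent ℂ fam' :=
    linearIndependent_of_top_le_span_of_card_eq_finrank hspanB hcardeq
  have liBZ : LinearIndependent ℤ fam' := by
    refine liB.restrict_scalars ?_
    intro r s h
    simpa [zsmul_eq_mul] using h
  have liQ : LinearIndependent ℤ fam := by
    refine LinearIndependent.of_comp (ψ.toAddMonoidHom.toIntLinearMap) ?_
    have : (⇑(ψ.toAddMonoidHom.toIntLinearMap)) ∘ fam = fam' := funext hcomp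
    rw [this]
    exact liBZ
  have bas : Module.Basis {f : Fin N → Fin m // ∃ i, (f i : ℕ) = 0} ℤ
      (MvPolynomial (Fin N) ℤ ⧸ J) := Module.Basis.mk liQ hspanQ
  refine ⟨Module.Free.of_basis bas, ?_, hncard⟩
  rw [Module.finrank_eq_card_basis bas, cardGT, hncard]
end

section
/- Let A = Z[x_1,...,x_N]/(x_1^m-1,...,x_N^m-1), θ = (x_1-1)···(x_N-1), and φ(t) = t^{m-1}+...+t+1. The multiplication map f ↦ fθ induces an isomorphism of A-modules from Ā := A/(φ(x_1),...,φ(x_N)) onto the principal ideal (θ) of A. -/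
open MvPolynomial

lemma memSpanOf {A B : Type} [CommRing A] [CommRing B] (F : A →+* B) {s : Set A} {x : A}
    (h : x ∈ Ideal.span s) {t : Set B} (hs : ∀ a ∈ s, F a ∈ Ideal.span t) :
    F x ∈ Ideal.span t := by
  have h1 : F x ∈ Ideal.map F (Ideal.span s) := Ideal.mem_map_of_mem F h
  rw [Ideal.map_span] at h1
  refine Ideal.span_le.mpr ?_ h1
  rintro b ⟨a, ha, rfl⟩
  exact hs a ha

lemma memSpanOfSurj {A B : Type} [CommRing A] [CommRing B] (F : A →+* B)
    (hF : Function.Surjective F) {x : A} {t : Set B}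
    (h : F x ∈ Ideal.span t) {s : Set A} (hker : RingHom.ker F ≤ Ideal.span s)
    (hts : ∀ b ∈ t, ∃ a ∈ Ideal.span s, F a = b) : x ∈ Ideal.span s := by
  have h1 : Ideal.span t ≤ Ideal.map F (Ideal.span s) := by
    rw [Ideal.span_le]
    intro b hb
    obtain ⟨a, ha, rfl⟩ := hts b hb
    exact Ideal.mem_map_of_mem F ha
  obtain ⟨y, hy, hyx⟩ := (Ideal.mem_map_iff_of_surjective F hF).mp (h1 h)
  have hxy : x - y ∈ RingHom.ker F := by
    rw [RingHom.mem_ker, map_sub, hyx, sub_self]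
  have := (Ideal.span s).add_mem (hker hxy) hy
  simpa using this

lemma oneVar (m : ℕ) {S : Type} [CommRing S] {g : Polynomial S}
    (h : (Polynomial.X - 1) * g ∈ Ideal.span {Polynomial.X ^ m - 1}) :
    g ∈ Ideal.span {∑ k ∈ Finset.range m, Polynomial.X ^ k} := by
  obtain ⟨c, hc⟩ := Ideal.mem_span_singleton.mp h
  rw [Ideal.mem_span_singleton]
  refine ⟨c, ?_⟩
  have hreg : IsRegular (Polynomial.X - 1 : Polynomial S) := by
    have := (Polynomial.monic_X_sub_C (1 : S)).isRegular
    simpa using this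
  refine hreg.left ?_
  show (Polynomial.X - 1) * g = (Polynomial.X - 1) * ((∑ k ∈ Finset.range m, Polynomial.X ^ k) * c)
  rw [hc, ← geom_sum_mul Polynomial.X m]
  ring

lemma oneVarRel (m : ℕ) {S : Type} [CommRing S] (T : Set S) {g : Polynomial S}
    (h : (Polynomial.X - 1) * g ∈
      Ideal.span ({Polynomial.X ^ m - 1} ∪ Polynomial.C '' T)) :
    g ∈ Ideal.span ({∑ k ∈ Finset.range m, Polynomial.X ^ k} ∪ Polynomial.C '' T) := by
  set K : Ideal S := Ideal.span T with hK
  set q : Polynomial S →+* Polynomial (S ⧸ K) :=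
    Polynomial.mapRingHom (Ideal.Quotient.mk K) with hq
  have h1 : q ((Polynomial.X - 1) * g) ∈ Ideal.span {Polynomial.X ^ m - 1} := by
    refine memSpanOf q h ?_
    rintro a (rfl | ⟨t, ht, rfl⟩)
    · have : q (Polynomial.X ^ m - 1) = Polynomial.X ^ m - 1 := by
        simp [hq]
      rw [this]
      exact Ideal.subset_span rfl
    · have : q (Polynomial.C t) = 0 := by
        simp only [hq, Polynomial.coe_mapRingHom, Polynomial.map_C]
        rw [show Ideal.Quotient.mk K t = 0 from
          Ideal.Quotient.eq_zero_iff_mem.mpr (Ideal.subset_span ht), map_zero]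
      rw [this]
      exact zero_mem _
  rw [map_mul] at h1
  have hq1 : q (Polynomial.X - 1) = Polynomial.X - 1 := by simp [hq]
  rw [hq1] at h1
  have h3 := oneVar m h1
  refine memSpanOfSurj q (by
      simpa [hq, Polynomial.coe_mapRingHom] using
        Polynomial.map_surjective _ (Ideal.Quotient.mk_surjective (I := K))) h3 ?_ ?_
  · rw [hq, Polynomial.ker_mapRingHom, Ideal.mk_ker, hK, Ideal.map_span]
    exact Ideal.span_mono (Set.subset_union_right)
  · rintro b rfl
    refine ⟨∑ k ∈ Finset.range m, Polynomial.X ^ k,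
      Ideal.subset_span (Or.inl rfl), ?_⟩
    simp [hq]

lemma mainInd (m : ℕ) (n : ℕ) : ∀ (R : Type) [CommRing R] (f : MvPolynomial (Fin n) R),
    f * ∏ i, (X i - 1) ∈ Ideal.span (Set.range fun i : Fin n => X i ^ m - 1) →
    f ∈ Ideal.span ((Set.range fun i : Fin n => X i ^ m - 1) ∪
      Set.range fun i : Fin n => ∑ k ∈ Finset.range m, X i ^ k) := by
  induction n with
  | zero =>
    intro R _ f h
    rw [show (Set.range fun i : Fin 0 => (X i ^ m - 1 : MvPolynomial (Fin 0) R)) = ∅ from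
        Set.range_eq_empty _, Ideal.span_empty, Finset.univ_eq_empty, Finset.prod_empty,
      mul_one, Ideal.mem_bot] at h
    rw [h]
    exact zero_mem _
  | succ n ih =>
    intro R _ f h
    set e := MvPolynomial.finSuccEquiv R n with he
    set E : MvPolynomial (Fin (n+1)) R →+* Polynomial (MvPolynomial (Fin n) R) :=
      e.toAlgHom.toRingHom with hE
    have hEapp : ∀ p, E p = e p := fun p => rfl
    set T : Set (MvPolynomial (Fin n) R) := Set.range fun i : Fin n => X i ^ m - 1 with hT
    set φP : Polynomial (MvPolynomial (Fin n) R) :=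
      ∑ k ∈ Finset.range m, Polynomial.X ^ k with hφP
    set c : MvPolynomial (Fin n) R := ∏ i : Fin n, (X i - 1) with hc
    -- step 1 : transport the hypothesis along e
    have hE0 : E (X (0 : Fin (n+1))) = Polynomial.X := by
      rw [hEapp, he, MvPolynomial.finSuccEquiv_X_zero]
    have hEs : ∀ j : Fin n, E (X j.succ) = Polynomial.C (X j) := by
      intro j; rw [hEapp, he, MvPolynomial.finSuccEquiv_X_succ]
    have hprod : E (∏ i : Fin (n+1), (X i - 1)) = (Polynomial.X - 1) * Polynomial.C c := by
      rw [Fin.prod_univ_succ, map_mul]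
      refine congrArg₂ (· * ·) ?_ ?_
      · rw [map_sub, hE0, map_one]
      · rw [hc, map_prod, map_prod]
        refine Finset.prod_congr rfl fun j _ => ?_
        rw [map_sub, hEs j, map_one, map_sub, map_one]
    have h1 : (Polynomial.X - 1) * (E f * Polynomial.C c)
        ∈ Ideal.span ({Polynomial.X ^ m - 1} ∪ Polynomial.C '' T) := by
      have hEh : E (f * ∏ i, (X i - 1)) ∈
          Ideal.span ({Polynomial.X ^ m - 1} ∪ Polynomial.C '' T) := by
        refine memSpanOf E h ?_
        rintro a ⟨i, rfl⟩
        refine Fin.cases ?_ ?_ i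
        · rw [map_sub, map_pow, hE0, map_one]
          exact Ideal.subset_span (Or.inl rfl)
        · intro j
          rw [map_sub, map_pow, hEs j, map_one]
          refine Ideal.subset_span (Or.inr ⟨X j ^ m - 1, ⟨j, rfl⟩, ?_⟩)
          rw [map_sub, map_pow, map_one]
      rw [map_mul, hprod] at hEh
      have : E f * ((Polynomial.X - 1) * Polynomial.C c)
          = (Polynomial.X - 1) * (E f * Polynomial.C c) := by ring
      rwa [this] at hEh
    have h2 := oneVarRel m T h1
    -- step 2 : change base ring to R[X]/(φ)
    set φR : Polynomial R := ∑ k ∈ Finset.range m, Polynomial.X ^ k with hφR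
    set χ : Polynomial (MvPolynomial (Fin n) R) ≃ₐ[R] MvPolynomial (Fin n) (Polynomial R) :=
      (MvPolynomial.optionEquivLeft R (Fin n)).symm.trans
        (MvPolynomial.optionEquivRight R (Fin n)) with hχ
    set χr : Polynomial (MvPolynomial (Fin n) R) →+* MvPolynomial (Fin n) (Polynomial R) :=
      χ.toAlgHom.toRingHom with hχr
    have hχapp : ∀ p, χr p = χ p := fun p => rfl
    have hχC : ∀ i : Fin n, χ (Polynomial.C (X i)) = X i := by
      intro i
      rw [hχ, AlgEquiv.trans_apply]
      rw [show (MvPolynomial.optionEquivLeft R (Fin n)).symm (Polynomial.C (X i))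
          = X (some i) from (AlgEquiv.symm_apply_eq _).mpr
            (MvPolynomial.optionEquivLeft_X_some R (Fin n) i).symm]
      exact MvPolynomial.optionEquivRight_X_some R (Fin n) i
    have hχX : χ Polynomial.X = MvPolynomial.C Polynomial.X := by
      rw [hχ, AlgEquiv.trans_apply]
      rw [show (MvPolynomial.optionEquivLeft R (Fin n)).symm Polynomial.X
          = X none from (AlgEquiv.symm_apply_eq _).mpr
            (MvPolynomial.optionEquivLeft_X_none R (Fin n)).symm]
      exact MvPolynomial.optionEquivRight_X_none R (Fin n)
    set μ : MvPolynomial (Fin n) (Polynomial R) →+*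
        MvPolynomial (Fin n) (Polynomial R ⧸ Ideal.span {φR}) :=
      MvPolynomial.map (Ideal.Quotient.mk (Ideal.span {φR})) with hμ
    set F : Polynomial (MvPolynomial (Fin n) R) →+*
        MvPolynomial (Fin n) (Polynomial R ⧸ Ideal.span {φR}) := μ.comp χr with hF
    have hFC : ∀ i : Fin n, F (Polynomial.C (X i)) = X i := by
      intro i
      rw [hF, RingHom.comp_apply, hχapp, hχC i, hμ, MvPolynomial.map_X]
    have hFφP : F φP = 0 := by
      have hχφP : χ φP = MvPolynomial.C φR := by
        rw [hφP, map_sum, hφR, map_sum]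
        refine Finset.sum_congr rfl fun k _ => ?_
        rw [map_pow, hχX, map_pow]
      rw [hF, RingHom.comp_apply, hχapp, hχφP, hμ, MvPolynomial.map_C]
      rw [show Ideal.Quotient.mk (Ideal.span {φR}) φR = 0 from
        Ideal.Quotient.eq_zero_iff_mem.mpr (Ideal.subset_span rfl), map_zero]
    have hFCc : F (Polynomial.C c) = ∏ i : Fin n, (X i - 1) := by
      rw [hc, map_prod, map_prod]
      refine Finset.prod_congr rfl fun i _ => ?_
      rw [map_sub, map_sub, hFC i, map_one, map_one]
    have h3 : F (E f) * ∏ i : Fin n, (X i - 1) ∈ Ideal.span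
        (Set.range fun i : Fin n =>
          (X i : MvPolynomial (Fin n) (Polynomial R ⧸ Ideal.span {φR})) ^ m - 1) := by
      have h3' := memSpanOf F h2 (t := Set.range fun i : Fin n =>
        (X i : MvPolynomial (Fin n) (Polynomial R ⧸ Ideal.span {φR})) ^ m - 1) ?_
      · rwa [map_mul, hFCc] at h3'
      · rintro a (rfl | ⟨t, ⟨i, rfl⟩, rfl⟩)
        · rw [hFφP]; exact zero_mem _
        · have : F (Polynomial.C (X i ^ m - 1)) = X i ^ m - 1 := by
            rw [map_sub, map_pow, map_sub, map_pow, hFC i, map_one, map_one]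
          rw [this]
          exact Ideal.subset_span ⟨i, rfl⟩
    have h4 := ih (Polynomial R ⧸ Ideal.span {φR}) (F (E f)) h3
    -- step 3 : pull back along μ
    set gens2 : Set (MvPolynomial (Fin n) (Polynomial R)) :=
      ((Set.range fun i : Fin n => X i ^ m - 1) ∪
        Set.range fun i : Fin n => ∑ k ∈ Finset.range m, X i ^ k) ∪
        {MvPolynomial.C φR} with hgens2
    have h5 : χr (E f) ∈ Ideal.span gens2 := by
      have hμsurj : Function.Surjective μ := by
        rw [hμ]
        exact MvPolynomial.map_surjective _ Ideal.Quotient.mk_surjective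
      refine memSpanOfSurj μ hμsurj (x := χr (E f))
        (t := (Set.range fun i : Fin n =>
          (X i : MvPolynomial (Fin n) (Polynomial R ⧸ Ideal.span {φR})) ^ m - 1) ∪
          Set.range fun i : Fin n => ∑ k ∈ Finset.range m, X i ^ k) h4 ?_ ?_
      · rw [hμ, MvPolynomial.ker_map, Ideal.mk_ker, Ideal.map_span, Set.image_singleton]
        exact Ideal.span_mono (Set.subset_union_right)
      · rintro b (⟨i, rfl⟩ | ⟨i, rfl⟩)
        · exact ⟨X i ^ m - 1, Ideal.subset_span (Or.inl (Or.inl ⟨i, rfl⟩)),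
            by rw [hμ, map_sub, map_pow, MvPolynomial.map_X, map_one]⟩
        · refine ⟨∑ k ∈ Finset.range m, X i ^ k,
            Ideal.subset_span (Or.inl (Or.inr ⟨i, rfl⟩)), ?_⟩
          rw [hμ, map_sum]
          exact Finset.sum_congr rfl fun k _ => by rw [map_pow, MvPolynomial.map_X]
    -- step 4 : pull back along χ and e
    have h6 : E f ∈ Ideal.span
        (((Set.range fun i : Fin n => Polynomial.C (X i ^ m - 1)) ∪
          Set.range fun i : Fin n => Polynomial.C (∑ k ∈ Finset.range m, X i ^ k)) ∪ {φP}) := by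
      have := memSpanOf χ.symm.toAlgHom.toRingHom h5 (t :=
        ((Set.range fun i : Fin n => Polynomial.C (X i ^ m - 1)) ∪
          Set.range fun i : Fin n => Polynomial.C (∑ k ∈ Finset.range m, X i ^ k)) ∪ {φP}) ?_
      · have hsymm : χ.symm.toAlgHom.toRingHom (χr (E f)) = E f := by
          show χ.symm (χ (E f)) = E f
          exact χ.symm_apply_apply _
        rwa [hsymm] at this
      · have hsX : ∀ i : Fin n, χ.symm (X i) = Polynomial.C (X i) := fun i =>
          (AlgEquiv.symm_apply_eq _).mpr (hχC i).symm
        have hsC : χ.symm (MvPolynomial.C Polynomial.X) = Polynomial.X :=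
          (AlgEquiv.symm_apply_eq _).mpr hχX.symm
        rintro b ((⟨i, rfl⟩ | ⟨i, rfl⟩) | rfl)
        · have : χ.symm.toAlgHom.toRingHom (X i ^ m - 1)
              = Polynomial.C (X i ^ m - 1) := by
            show χ.symm (X i ^ m - 1) = _
            rw [map_sub, map_pow, hsX i, map_sub, map_pow, map_one, map_one]
          rw [this]
          exact Ideal.subset_span (Or.inl (Or.inl ⟨i, rfl⟩))
        · have : χ.symm.toAlgHom.toRingHom (∑ k ∈ Finset.range m, X i ^ k)
              = Polynomial.C (∑ k ∈ Finset.range m, X i ^ k) := by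
            show χ.symm (∑ k ∈ Finset.range m, X i ^ k) = _
            rw [map_sum, map_sum]
            exact Finset.sum_congr rfl fun k _ => by rw [map_pow, hsX i, map_pow]
          rw [this]
          exact Ideal.subset_span (Or.inl (Or.inr ⟨i, rfl⟩))
        · have : χ.symm.toAlgHom.toRingHom (MvPolynomial.C φR) = φP := by
            show χ.symm (MvPolynomial.C φR) = φP
            rw [hφR, map_sum, hφP, map_sum]
            refine Finset.sum_congr rfl fun k _ => ?_
            rw [map_pow, map_pow, hsC]
          rw [this]
          exact Ideal.subset_span (Or.inr rfl)
    -- final pull back along e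
    have hfinal := memSpanOf e.symm.toAlgHom.toRingHom h6 (t :=
      (Set.range fun i : Fin (n+1) => X i ^ m - 1) ∪
        Set.range fun i : Fin (n+1) => ∑ k ∈ Finset.range m, X i ^ k) ?_
    · have : e.symm.toAlgHom.toRingHom (E f) = f := by
        show e.symm (e f) = f
        exact e.symm_apply_apply f
      rwa [this] at hfinal
    · have hsX0 : e.symm Polynomial.X = X (0 : Fin (n+1)) := by
        rw [AlgEquiv.symm_apply_eq, he, MvPolynomial.finSuccEquiv_X_zero]
      have hsXs : ∀ j : Fin n, e.symm (Polynomial.C (X j)) = X j.succ := fun j => by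
        rw [AlgEquiv.symm_apply_eq, he, MvPolynomial.finSuccEquiv_X_succ]
      rintro b ((⟨i, rfl⟩ | ⟨i, rfl⟩) | rfl)
      · have : e.symm.toAlgHom.toRingHom (Polynomial.C (X i ^ m - 1))
            = X i.succ ^ m - 1 := by
          show e.symm (Polynomial.C (X i ^ m - 1)) = _
          rw [show (Polynomial.C (X i ^ m - 1) : Polynomial (MvPolynomial (Fin n) R))
              = Polynomial.C (X i) ^ m - 1 by rw [map_sub, map_pow, map_one]]
          rw [map_sub, map_pow, hsXs i, map_one]
        rw [this]
        exact Ideal.subset_span (Or.inl ⟨i.succ, rfl⟩)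
      · have : e.symm.toAlgHom.toRingHom (Polynomial.C (∑ k ∈ Finset.range m, X i ^ k))
            = ∑ k ∈ Finset.range m, X i.succ ^ k := by
          show e.symm (Polynomial.C (∑ k ∈ Finset.range m, X i ^ k)) = _
          rw [map_sum, map_sum]
          exact Finset.sum_congr rfl fun k _ => by rw [map_pow, map_pow, hsXs i]
        rw [this]
        exact Ideal.subset_span (Or.inr ⟨i.succ, rfl⟩)
      · have : e.symm.toAlgHom.toRingHom φP = ∑ k ∈ Finset.range m, X (0 : Fin (n+1)) ^ k := by
          show e.symm φP = _
          rw [hφP, map_sum]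
          exact Finset.sum_congr rfl fun k _ => by rw [map_pow, hsX0]
        rw [this]
        exact Ideal.subset_span (Or.inr ⟨0, rfl⟩)

/-- Let `A = ℤ[x_1,…,x_N]/(x_1^m-1,…,x_N^m-1)`, `θ = (x_1-1)⋯(x_N-1)` and
`φ(t) = t^{m-1}+⋯+t+1`. Multiplication `f ↦ fθ` induces an isomorphism of
`A`-modules from `Ā = A/(φ(x_1),…,φ(x_N))` onto the principal ideal `(θ)` of `A`. -/
theorem stmt_4 (m N : ℕ) (hm : 2 ≤ m) (hN : 1 ≤ N)
    (I : Ideal (MvPolynomial (Fin N) ℤ))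
    (hI : I = Ideal.span (Set.range fun i : Fin N => X i ^ m - 1))
    (θA : MvPolynomial (Fin N) ℤ ⧸ I)
    (hθ : θA = Ideal.Quotient.mk I (∏ i, (X i - 1)))
    (J : Ideal (MvPolynomial (Fin N) ℤ ⧸ I))
    (hJ : J = Ideal.span
      (Set.range fun i : Fin N =>
        Ideal.Quotient.mk I (∑ k ∈ Finset.range m, X i ^ k))) :
    ∃ e : ((MvPolynomial (Fin N) ℤ ⧸ I) ⧸ J) ≃ₗ[MvPolynomial (Fin N) ℤ ⧸ I]
        (Ideal.span {θA} : Ideal (MvPolynomial (Fin N) ℤ ⧸ I)),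
      ∀ f : MvPolynomial (Fin N) ℤ ⧸ I,
        (e (Ideal.Quotient.mk J f) : MvPolynomial (Fin N) ℤ ⧸ I) = f * θA := by
  have key1 : ∀ x ∈ J, x * θA = 0 := by
    intro x hx
    rw [hJ] at hx
    refine Submodule.span_induction ?_ ?_ ?_ ?_ hx
    · rintro y ⟨i, rfl⟩
      rw [hθ, ← map_mul, Ideal.Quotient.eq_zero_iff_mem]
      have hsplit : ((∑ k ∈ Finset.range m, X i ^ k : MvPolynomial (Fin N) ℤ)) * ∏ j, (X j - 1)
          = (X i ^ m - 1 : MvPolynomial (Fin N) ℤ) * ∏ j ∈ Finset.univ.erase i, (X j - 1) := by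
        rw [← Finset.mul_prod_erase Finset.univ _ (Finset.mem_univ i),
          ← mul_assoc, geom_sum_mul]
      rw [hsplit, hI]
      exact Ideal.mul_mem_right _ _ (Ideal.subset_span ⟨i, rfl⟩)
    · rw [zero_mul]
    · intro a b _ _ ha hb
      rw [add_mul, ha, hb, add_zero]
    · intro r a _ ha
      rw [smul_eq_mul, mul_assoc, ha, mul_zero]
  have key2 : ∀ g, g * θA = 0 → g ∈ J := by
    intro g hg
    obtain ⟨f, rfl⟩ := Ideal.Quotient.mk_surjective g
    rw [hθ, ← map_mul, Ideal.Quotient.eq_zero_iff_mem, hI] at hg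
    have hf := mainInd m N ℤ f hg
    rw [hJ]
    refine memSpanOf (Ideal.Quotient.mk I) hf ?_
    rintro a (⟨i, rfl⟩ | ⟨i, rfl⟩)
    · rw [show Ideal.Quotient.mk I (X i ^ m - 1) = 0 from
        Ideal.Quotient.eq_zero_iff_mem.mpr (hI ▸ Ideal.subset_span ⟨i, rfl⟩)]
      exact zero_mem _
    · exact Ideal.subset_span ⟨i, rfl⟩
  set gLin : (MvPolynomial (Fin N) ℤ ⧸ I) →ₗ[MvPolynomial (Fin N) ℤ ⧸ I]
      (Ideal.span {θA} : Ideal (MvPolynomial (Fin N) ℤ ⧸ I)) :=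
    LinearMap.toSpanSingleton _ _ ⟨θA, Ideal.subset_span rfl⟩ with hg
  have hgapp : ∀ x, (gLin x : MvPolynomial (Fin N) ℤ ⧸ I) = x * θA := by
    intro x
    rw [hg, LinearMap.toSpanSingleton_apply]
    rfl
  have hker : LinearMap.ker gLin = J := by
    ext x
    rw [LinearMap.mem_ker]
    constructor
    · intro hx
      refine key2 x ?_
      rw [← hgapp x, hx]
      rfl
    · intro hx
      have := key1 x hx
      exact Subtype.ext (by rw [hgapp x, this]; rfl)
  have hrange : LinearMap.range gLin = ⊤ := by
    rw [LinearMap.range_eq_top]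
    rintro ⟨y, hy⟩
    obtain ⟨a, ha⟩ := Ideal.mem_span_singleton'.mp hy
    exact ⟨a, Subtype.ext (by rw [hgapp a]; exact ha)⟩
  set ℓ := J.liftQ gLin (le_of_eq hker.symm) with hl
  have hinj : Function.Injective ℓ :=
    LinearMap.ker_eq_bot.mp (Submodule.ker_liftQ_eq_bot _ _ _ (le_of_eq hker))
  have hsurj : Function.Surjective ℓ :=
    LinearMap.range_eq_top.mp (by rw [hl, Submodule.range_liftQ]; exact hrange)
  refine ⟨LinearEquiv.ofBijective ℓ ⟨hinj, hsurj⟩, fun f => ?_⟩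
  have : (LinearEquiv.ofBijective ℓ ⟨hinj, hsurj⟩) (Ideal.Quotient.mk J f)
      = ℓ (Submodule.Quotient.mk f) := rfl
  rw [this, hl, Submodule.liftQ_apply, hgapp]
end

section
/- Let φ: M_1 → M_2 be a homomorphism of finitely generated free Z-modules with dual φ^∨: Hom(M_2,Z) → Hom(M_1,Z). Then there is a canonical isomorphism Tors coker(φ) ≅ Hom_Z(Tors coker(φ^∨), Q/Z). -/
open Module LinearMap
open scoped DirectSum

noncomputable section Stmt7Aux

private def piZModReindex {ι κ : Type} (m : ι → ℕ) (e : κ ≃ ι) :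
    ((j : ι) → ZMod (m j)) ≃+ ((k : κ) → ZMod (m (e k))) :=
  { Equiv.piCongrLeft' (fun j => ZMod (m j)) e.symm with map_add' := fun _ _ => rfl }

private def piZModCongr {ι : Type} {m m' : ι → ℕ} (h : ∀ i, m i = m' i) :
    ((i : ι) → ZMod (m i)) ≃+ ((i : ι) → ZMod (m' i)) := by
  have hm : m = m' := funext h
  subst hm
  exact AddEquiv.refl _

private lemma mem_tors_map {A B : Type*} [AddCommGroup A] [AddCommGroup B]
    (e : A →ₗ[ℤ] B) {x : A}
    (hx : x ∈ Submodule.torsion ℤ A) : e x ∈ Submodule.torsion ℤ B := by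
  obtain ⟨c, hc⟩ := (Submodule.mem_torsion_iff x).mp hx
  refine (Submodule.mem_torsion_iff _).mpr ⟨c, ?_⟩
  rw [Submonoid.smul_def] at hc ⊢
  rw [← map_smul e, hc, map_zero]

private lemma snf_a_ne_zero {M : Type*} [AddCommGroup M] {ι : Type}
    {N : Submodule ℤ M} {n : ℕ} (snf : Basis.SmithNormalForm N ι n) (i : Fin n) :
    snf.a i ≠ 0 := by
  intro h
  have h0 : (snf.bN i : M) = 0 := by rw [snf.snf i, h, zero_smul]
  exact snf.bN.ne_zero i (by exact_mod_cast h0)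

private def torsCongr {A B : Type*} [AddCommGroup A] [AddCommGroup B] (e : A ≃+ B) :
    Submodule.torsion ℤ A ≃+ Submodule.torsion ℤ B where
  toFun x := ⟨e x.1, mem_tors_map e.toAddMonoidHom.toIntLinearMap x.2⟩
  invFun y := ⟨e.symm y.1, mem_tors_map e.symm.toAddMonoidHom.toIntLinearMap y.2⟩
  left_inv x := by ext; simp
  right_inv y := by ext; simp
  map_add' x y := by ext; simp

private lemma tors_pi_zmod {ι : Type} [Fintype ι] (m : ι → ℕ) :
    Nonempty (Submodule.torsion ℤ ((j : ι) → ZMod (m j)) ≃+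
      ((j : {j : ι // m j ≠ 0}) → ZMod (m j.1))) := by
  classical
  let F : Submodule.torsion ℤ ((j : ι) → ZMod (m j)) →+
      ((j : {j : ι // m j ≠ 0}) → ZMod (m j.1)) :=
    { toFun := fun t j => t.1 j.1
      map_zero' := rfl
      map_add' := fun a b => rfl }
  have key : ∀ t : Submodule.torsion ℤ ((j : ι) → ZMod (m j)), ∀ j, m j = 0 → t.1 j = 0 := by
    intro t j hj
    obtain ⟨c, hc⟩ := (Submodule.mem_torsion_iff _).mp t.2
    rw [Submonoid.smul_def] at hc
    have hj' : (c : ℤ) • t.1 j = 0 := congrFun hc j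
    obtain ⟨y, hy⟩ := ZMod.intCast_surjective (n := m j) (t.1 j)
    rw [← hy, zsmul_eq_mul, ← Int.cast_mul, ZMod.intCast_zmod_eq_zero_iff_dvd, hj] at hj'
    have : (c : ℤ) * y = 0 := by exact_mod_cast (zero_dvd_iff.mp hj')
    have hy0 : y = 0 := by
      rcases mul_eq_zero.mp this with h | h
      · exact absurd h (nonZeroDivisors.ne_zero c.2)
      · exact h
    rw [← hy, hy0, Int.cast_zero]
  have hinj : Function.Injective F := by
    intro t t' h
    apply Subtype.ext; funext j
    by_cases hj : m j = 0
    · rw [key t j hj, key t' j hj]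
    · exact congrFun h ⟨j, hj⟩
  have hsurj : Function.Surjective F := by
    intro g
    set P : ℕ := ∏ j : ι, max 1 (m j) with hP
    have hP0 : P ≠ 0 := Finset.prod_ne_zero_iff.mpr fun j _ => by positivity
    refine ⟨⟨fun j => if h : m j ≠ 0 then g ⟨j, h⟩ else 0, ?_⟩, ?_⟩
    · refine (Submodule.mem_torsion_iff _).mpr
        ⟨⟨(P : ℤ), mem_nonZeroDivisors_of_ne_zero (Int.natCast_ne_zero.mpr hP0)⟩, ?_⟩
      rw [Submonoid.smul_def]
      funext j
      show (P : ℤ) • (if h : m j ≠ 0 then g ⟨j, h⟩ else 0) = (0 : ZMod (m j))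
      by_cases hj : m j ≠ 0
      · have hdvd : m j ∣ P := by
          have : max 1 (m j) = m j := max_eq_right (Nat.one_le_iff_ne_zero.mpr hj)
          exact this ▸ Finset.dvd_prod_of_mem _ (Finset.mem_univ j)
        rw [zsmul_eq_mul]
        have : ((P : ℤ) : ZMod (m j)) = 0 := by
          rw [ZMod.intCast_zmod_eq_zero_iff_dvd]
          exact_mod_cast hdvd
        rw [this, zero_mul]
      · simp [dif_neg hj]
    · funext j
      simp only [F, AddMonoidHom.coe_mk, ZeroHom.coe_mk]
      exact dif_pos j.2
  exact ⟨AddEquiv.ofBijective F ⟨hinj, hsurj⟩⟩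

private noncomputable def qchar (n : ℕ) [NeZero n] : ZMod n →+ AddCircle (1 : ℚ) :=
  ZMod.lift n ⟨(zmultiplesHom (AddCircle (1 : ℚ))) (((n : ℚ)⁻¹ : ℚ) : AddCircle (1 : ℚ)), by
    have hn : (n : ℚ) ≠ 0 := Nat.cast_ne_zero.mpr (NeZero.ne n)
    show ((n : ℤ)) • (((n : ℚ)⁻¹ : ℚ) : AddCircle (1 : ℚ)) = 0
    rw [← AddCircle.coe_zsmul]
    have : ((n : ℤ)) • ((n : ℚ)⁻¹) = (1 : ℚ) := by
      rw [zsmul_eq_mul]; push_cast; field_simp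
    rw [this, AddCircle.coe_period]⟩

private lemma qchar_intCast (n : ℕ) [NeZero n] (k : ℤ) :
    qchar n ((k : ℤ) : ZMod n) = ((k * (n : ℚ)⁻¹ : ℚ) : AddCircle (1 : ℚ)) := by
  rw [qchar, ZMod.lift_coe]
  show (k : ℤ) • (((n : ℚ)⁻¹ : ℚ) : AddCircle (1 : ℚ)) = _
  rw [← AddCircle.coe_zsmul, zsmul_eq_mul]

private lemma qchar_eq_zero_iff (n : ℕ) [NeZero n] (k : ℤ) :
    qchar n ((k : ℤ) : ZMod n) = 0 ↔ (n : ℤ) ∣ k := by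
  have hn : (n : ℚ) ≠ 0 := Nat.cast_ne_zero.mpr (NeZero.ne n)
  rw [qchar_intCast, AddCircle.coe_eq_zero_iff]
  constructor
  · rintro ⟨m, hm⟩
    rw [zsmul_eq_mul, mul_one] at hm
    refine ⟨m, ?_⟩
    have h2 : (k : ℚ) = (n : ℚ) * (m : ℚ) := by field_simp at hm; linarith
    exact_mod_cast h2
  · rintro ⟨m, rfl⟩
    refine ⟨m, ?_⟩
    rw [zsmul_eq_mul, mul_one]
    push_cast
    field_simp

private noncomputable def zmodCharPhi (n : ℕ) [NeZero n] :
    ZMod n →+ (ZMod n →+ AddCircle (1 : ℚ)) where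
  toFun x := (qchar n).comp (AddMonoidHom.mulLeft x)
  map_zero' := by ext y; simp
  map_add' x x' := by ext y; simp [add_mul]

private lemma hom_ext_zmod (n : ℕ) [NeZero n] (f g : ZMod n →+ AddCircle (1 : ℚ))
    (h : f 1 = g 1) : f = g := by
  ext x
  obtain ⟨k, rfl⟩ := ZMod.intCast_surjective (n := n) x
  have hk : ((k : ℤ) : ZMod n) = (k : ℤ) • (1 : ZMod n) := by
    rw [zsmul_eq_mul, mul_one]
  rw [hk, map_zsmul, map_zsmul, h]

private noncomputable def zmodCharEquiv (n : ℕ) [NeZero n] :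
    ZMod n ≃+ (ZMod n →+ AddCircle (1 : ℚ)) := by
  refine AddEquiv.ofBijective (zmodCharPhi n) ⟨?_, ?_⟩
  · intro x y hxy
    obtain ⟨k, rfl⟩ := ZMod.intCast_surjective (n := n) x
    obtain ⟨l, rfl⟩ := ZMod.intCast_surjective (n := n) y
    have h1 : zmodCharPhi n (k : ZMod n) 1 = zmodCharPhi n (l : ZMod n) 1 := by rw [hxy]
    have h2 : qchar n ((k - l : ℤ) : ZMod n) = 0 := by
      have hc : ((k - l : ℤ) : ZMod n) = ((k : ℤ) : ZMod n) - ((l : ℤ) : ZMod n) := by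
        push_cast; ring
      rw [hc, map_sub, sub_eq_zero]
      simpa [zmodCharPhi, mul_one] using h1
    have hdvd : (n : ℤ) ∣ k - l := (qchar_eq_zero_iff n _).mp h2
    have : ((k - l : ℤ) : ZMod n) = 0 := (ZMod.intCast_zmod_eq_zero_iff_dvd _ n).mpr hdvd
    have hc : ((k : ℤ) : ZMod n) - ((l : ℤ) : ZMod n) = 0 := by
      rw [← this]; push_cast; ring
    exact sub_eq_zero.mp hc
  · intro f
    obtain ⟨q, hq⟩ := QuotientAddGroup.mk_surjective (f 1)
    have hn : (n : ℚ) ≠ 0 := Nat.cast_ne_zero.mpr (NeZero.ne n)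
    have hna : ((n : ℤ)) • f 1 = 0 := by
      rw [← map_zsmul f, zsmul_eq_mul, mul_one]
      norm_cast
      rw [ZMod.natCast_self, map_zero]
    obtain ⟨m, hm⟩ : ∃ m : ℤ, m • (1 : ℚ) = (n : ℤ) • q := by
      rw [← AddCircle.coe_eq_zero_iff, AddCircle.coe_zsmul, hq, hna]
    refine ⟨(m : ZMod n), hom_ext_zmod n _ f ?_⟩
    have h3 : zmodCharPhi n ((m : ℤ) : ZMod n) 1 = qchar n ((m : ℤ) : ZMod n) := by
      simp [zmodCharPhi, mul_one]
    rw [h3, qchar_intCast, ← hq]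
    congr 1
    rw [zsmul_eq_mul, mul_one, zsmul_eq_mul] at hm
    field_simp
    linear_combination hm

private lemma charEquiv (G : Type*) [AddCommGroup G] [Finite G] :
    Nonempty (G ≃+ (G →+ AddCircle (1 : ℚ))) := by
  classical
  cases nonempty_fintype G
  obtain ⟨ι, hι, n, hn, ⟨e⟩⟩ := AddCommGroup.equiv_directSum_zmod_of_finite' G
  haveI := hι
  haveI : ∀ i, NeZero (n i) := fun i => ⟨by have := hn i; omega⟩
  let e2 : (⨁ i, ZMod (n i)) ≃+ ((i : ι) → ZMod (n i)) :=
    { DFinsupp.equivFunOnFintype with map_add' := fun _ _ => rfl }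
  let E : G ≃+ ((i : ι) → ZMod (n i)) := e.trans e2
  let e3 := AddEquiv.piCongrRight (fun i => zmodCharEquiv (n i))
  let e4 := (Pi.addMonoidHomAddEquiv (fun i => ZMod (n i)) (AddCircle (1 : ℚ))).symm
  let e5 := AddEquiv.addMonoidHomCongrLeft (N := AddCircle (1 : ℚ)) E.symm
  exact ⟨E.trans (e3.trans (e4.trans e5))⟩

private lemma tors_quot_of_le {W V : Type*} [AddCommGroup W] [AddCommGroup V]
    (f : V →ₗ[ℤ] W) (_hf : Function.Injective f)
    (P : Submodule ℤ W) (hPQ : P ≤ LinearMap.range f)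
    (hQ : ∀ c : ℤ, c ≠ 0 → ∀ w : W, c • w ∈ LinearMap.range f → w ∈ LinearMap.range f) :
    Nonempty (Submodule.torsion ℤ (W ⧸ P) ≃+ Submodule.torsion ℤ (V ⧸ P.comap f)) := by
  let j : (V ⧸ P.comap f) →ₗ[ℤ] (W ⧸ P) := Submodule.mapQ _ P f le_rfl
  have hj : ∀ v : V, j (Submodule.Quotient.mk v) = Submodule.Quotient.mk (f v) :=
    fun v => Submodule.mapQ_apply _ _ _ _
  let F : Submodule.torsion ℤ (V ⧸ P.comap f) →+ Submodule.torsion ℤ (W ⧸ P) :=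
    { toFun := fun t => ⟨j t.1, mem_tors_map j t.2⟩
      map_zero' := by ext; simp
      map_add' := fun a b => by ext; simp }
  have hinj : Function.Injective F := by
    intro a b hab
    have h1 : j a.1 = j b.1 := congrArg Subtype.val hab
    apply Subtype.ext
    obtain ⟨va, hva⟩ := Submodule.Quotient.mk_surjective _ a.1
    obtain ⟨vb, hvb⟩ := Submodule.Quotient.mk_surjective _ b.1
    rw [← hva, ← hvb] at h1 ⊢
    rw [hj, hj] at h1
    rw [Submodule.Quotient.eq] at h1 ⊢
    rw [← map_sub] at h1
    exact Submodule.mem_comap.mpr h1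
  have hsurj : Function.Surjective F := by
    rintro ⟨x, hx⟩
    obtain ⟨w, rfl⟩ := Submodule.Quotient.mk_surjective _ x
    obtain ⟨c, hc⟩ := (Submodule.mem_torsion_iff _).mp hx
    rw [Submonoid.smul_def, ← Submodule.Quotient.mk_smul, Submodule.Quotient.mk_eq_zero] at hc
    obtain ⟨v, rfl⟩ := hQ (c : ℤ) (nonZeroDivisors.ne_zero c.2) w (hPQ hc)
    have htors : (Submodule.Quotient.mk v : V ⧸ P.comap f) ∈ Submodule.torsion ℤ _ := by
      refine (Submodule.mem_torsion_iff _).mpr ⟨c, ?_⟩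
      rw [Submonoid.smul_def, ← Submodule.Quotient.mk_smul, Submodule.Quotient.mk_eq_zero]
      exact Submodule.mem_comap.mpr (by rw [map_smul]; exact hc)
    refine ⟨⟨Submodule.Quotient.mk v, htors⟩, ?_⟩
    apply Subtype.ext
    exact hj v
  exact ⟨(AddEquiv.ofBijective F ⟨hinj, hsurj⟩).symm⟩

private lemma quot_snf_equiv {M : Type*} [AddCommGroup M] {ι : Type} [Fintype ι]
    {N : Submodule ℤ M} {n : ℕ} (snf : Basis.SmithNormalForm N ι n) :
    Nonempty (Submodule.torsion ℤ (M ⧸ N) ≃+ ((i : Fin n) → ZMod (snf.a i).natAbs)) := by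
  classical
  set d : ι → ℤ := fun jj => if h : ∃ i, snf.f i = jj then snf.a h.choose else 0 with hd
  have hdf : ∀ i, d (snf.f i) = snf.a i := by
    intro i
    have h : ∃ i', snf.f i' = snf.f i := ⟨i, rfl⟩
    have h2 : h.choose = i := snf.f.injective h.choose_spec
    simp only [hd, dif_pos h, h2]
  have hd0 : ∀ jj, jj ∉ Set.range snf.f → d jj = 0 := by
    intro jj hjj
    have : ¬ ∃ i, snf.f i = jj := by simpa [Set.mem_range] using hjj
    simp only [hd, dif_neg this]
  let q : M →ₗ[ℤ] ((jj : ι) → ZMod (d jj).natAbs) :=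
    LinearMap.pi fun jj => ((Int.castAddHom (ZMod (d jj).natAbs)).toIntLinearMap.comp
      ((LinearMap.proj jj).comp snf.bM.equivFun.toLinearMap))
  have hq : ∀ x jj, q x jj = ((snf.bM.equivFun x jj : ℤ) : ZMod (d jj).natAbs) := fun x jj => rfl
  have hsurj : Function.Surjective q := by
    intro y
    have h := fun jj => ZMod.intCast_surjective (n := (d jj).natAbs) (y jj)
    choose k hk using h
    exact ⟨snf.bM.equivFun.symm k, by funext jj; rw [hq, snf.bM.equivFun.apply_symm_apply]; exact hk jj⟩
  have hker : N = LinearMap.ker q := by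
    apply le_antisymm
    · intro x hx
      rw [LinearMap.mem_ker]
      funext jj
      rw [hq]
      show _ = (0 : ZMod (d jj).natAbs)
      rw [ZMod.intCast_zmod_eq_zero_iff_dvd, Int.natAbs_dvd]
      by_cases hjj : jj ∈ Set.range snf.f
      · obtain ⟨i, rfl⟩ := hjj
        have := congrFun (snf.repr_comp_embedding_eq_smul ⟨x, hx⟩) i
        simp only [Function.comp_apply, Pi.smul_apply, smul_eq_mul] at this
        rw [Basis.equivFun_apply, hdf i]
        exact ⟨snf.bN.repr ⟨x, hx⟩ i, this⟩
      · rw [Basis.equivFun_apply, snf.repr_eq_zero_of_notMem_range ⟨x, hx⟩ hjj]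
        exact dvd_zero _
    · intro x hx
      rw [LinearMap.mem_ker] at hx
      have hdvd : ∀ jj, d jj ∣ snf.bM.equivFun x jj := by
        intro jj
        have := congrFun hx jj
        rw [hq, Pi.zero_apply] at this
        rwa [ZMod.intCast_zmod_eq_zero_iff_dvd, Int.natAbs_dvd] at this
      have hzero : ∀ jj, jj ∉ Set.range snf.f → snf.bM.equivFun x jj = 0 := by
        intro jj hjj
        have := hdvd jj
        rw [hd0 jj hjj] at this
        exact zero_dvd_iff.mp this
      choose c hc using fun i => (hdf i ▸ hdvd (snf.f i))
      have hx2 : x = ∑ i : Fin n, c i • (snf.bN i : M) := by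
        conv_lhs => rw [← snf.bM.sum_equivFun x]
        rw [← Finset.sum_subset (Finset.subset_univ (Finset.univ.map snf.f))]
        · rw [Finset.sum_map]
          apply Finset.sum_congr rfl
          intro i _
          rw [snf.snf i, hc i, mul_comm, mul_smul]
        · intro jj _ hjj
          have : jj ∉ Set.range snf.f := by
            simpa [Finset.mem_map, Set.mem_range] using hjj
          rw [hzero jj this, zero_smul]
      rw [hx2]
      exact Submodule.sum_mem _ fun i _ => Submodule.smul_mem _ _ (snf.bN i).2
  let e1 : (M ⧸ N) ≃ₗ[ℤ] ((jj : ι) → ZMod (d jj).natAbs) :=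
    (Submodule.quotEquivOfEq N (LinearMap.ker q) hker).trans (q.quotKerEquivOfSurjective hsurj)
  obtain ⟨e2⟩ := tors_pi_zmod (fun jj => (d jj).natAbs)
  have hne : ∀ i : Fin n, (d (snf.f i)).natAbs ≠ 0 := by
    intro i
    rw [hdf i]
    exact Int.natAbs_ne_zero.mpr (snf_a_ne_zero snf i)
  let eIdx : Fin n ≃ {jj : ι // (d jj).natAbs ≠ 0} :=
    Equiv.ofBijective (fun i => ⟨snf.f i, hne i⟩)
      ⟨fun i i' h => snf.f.injective (congrArg Subtype.val h), by
        rintro ⟨jj, hjj⟩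
        by_cases hr : jj ∈ Set.range snf.f
        · obtain ⟨i, rfl⟩ := hr
          exact ⟨i, rfl⟩
        · exact absurd (by rw [hd0 jj hr]; rfl) hjj⟩
  let e3 := piZModReindex (fun s : {jj : ι // (d jj).natAbs ≠ 0} => (d s.1).natAbs) eIdx
  let e4 := piZModCongr (fun i : Fin n => by
    show (d (snf.f i)).natAbs = (snf.a i).natAbs
    rw [hdf i])
  exact ⟨(((torsCongr e1.toAddEquiv).trans e2).trans e3).trans e4⟩

private lemma side2 {M₁ M₂ : Type*} [AddCommGroup M₁] [AddCommGroup M₂]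
    (φ : M₁ →ₗ[ℤ] M₂) {ι : Type} [Fintype ι]
    {n : ℕ} (snf : Basis.SmithNormalForm (LinearMap.range φ) ι n) :
    Nonempty (Submodule.torsion ℤ
        (Module.Dual ℤ M₁ ⧸ LinearMap.range (Module.Dual.transpose φ)) ≃+
      ((i : Fin n) → ZMod (snf.a i).natAbs)) := by
  classical
  let π : M₁ →ₗ[ℤ] LinearMap.range φ := φ.rangeRestrict
  have hπ : Function.Surjective π := φ.surjective_rangeRestrict
  let Tπ : Dual ℤ (LinearMap.range φ) →ₗ[ℤ] Dual ℤ M₁ := Module.Dual.transpose (R := ℤ) π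
  let Tι : Dual ℤ M₂ →ₗ[ℤ] Dual ℤ (LinearMap.range φ) :=
    Module.Dual.transpose (R := ℤ) (LinearMap.range φ).subtype
  have hcomp : Module.Dual.transpose (R := ℤ) φ = Tπ.comp Tι := by
    conv_lhs => rw [show φ = (LinearMap.range φ).subtype.comp π from
      (LinearMap.subtype_comp_codRestrict _ _ _).symm]
    exact Module.Dual.transpose_comp _ _
  have hrange : LinearMap.range (Module.Dual.transpose (R := ℤ) φ) =
      Submodule.map Tπ (LinearMap.range Tι) := by
    rw [hcomp, LinearMap.range_comp]
  have hTπapp : ∀ (μ : Dual ℤ (LinearMap.range φ)) (x : M₁), Tπ μ x = μ (π x) := fun μ x => rfl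
  have hTιapp : ∀ (μ : Dual ℤ M₂) (v : LinearMap.range φ), Tι μ v = μ (v : M₂) := fun μ v => rfl
  have hTπinj : Function.Injective Tπ := by
    intro μ ν h
    apply LinearMap.ext
    intro y
    obtain ⟨x, rfl⟩ := hπ y
    have := DFunLike.congr_fun h x
    rwa [hTπapp, hTπapp] at this
  have htf : ∀ c : ℤ, c ≠ 0 → ∀ w : Dual ℤ M₁,
      c • w ∈ LinearMap.range Tπ → w ∈ LinearMap.range Tπ := by
    intro c hc w hw
    obtain ⟨μ, hμ⟩ := hw
    have hker : ∀ x ∈ LinearMap.ker φ, w x = 0 := by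
      intro x hx
      have hπx : π x = 0 := by
        apply Subtype.ext
        show φ x = 0
        exact hx
      have h0 := DFunLike.congr_fun hμ x
      rw [hTπapp, hπx, map_zero, LinearMap.smul_apply, smul_eq_mul] at h0
      exact (mul_eq_zero.mp h0.symm).resolve_left hc
    let w' : (M₁ ⧸ LinearMap.ker φ) →ₗ[ℤ] ℤ :=
      (LinearMap.ker φ).liftQ w (fun x hx => hker x hx)
    let e : (M₁ ⧸ LinearMap.ker φ) ≃ₗ[ℤ] LinearMap.range φ := φ.quotKerEquivRange
    refine ⟨w'.comp (e.symm : LinearMap.range φ →ₗ[ℤ] (M₁ ⧸ LinearMap.ker φ)), ?_⟩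
    apply LinearMap.ext
    intro x
    rw [hTπapp]
    have hex : e (Submodule.Quotient.mk x) = π x := by
      apply Subtype.ext
      show (e (Submodule.Quotient.mk x) : M₂) = φ x
      exact LinearMap.quotKerEquivRange_apply_mk φ x
    have hesymm : e.symm (π x) = Submodule.Quotient.mk x := by
      rw [← hex, e.symm_apply_apply]
    show w' (e.symm (π x)) = w x
    rw [hesymm]
    exact Submodule.liftQ_apply _ _ _
  obtain ⟨E1⟩ := tors_quot_of_le Tπ hTπinj (LinearMap.range (Module.Dual.transpose (R := ℤ) φ))
    (by rw [hrange]; rintro x ⟨v, _, rfl⟩; exact ⟨v, rfl⟩) htf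
  have hcomap : (LinearMap.range (Module.Dual.transpose (R := ℤ) φ)).comap Tπ =
      LinearMap.range Tι := by
    rw [hrange]
    exact Submodule.comap_map_eq_of_injective hTπinj _
  rw [hcomap] at E1
  -- now compute Dual (range φ) ⧸ range Tι
  let m : Fin n → ℕ := fun i => (snf.a i).natAbs
  let Q2 : Dual ℤ (LinearMap.range φ) →ₗ[ℤ] ((i : Fin n) → ZMod (m i)) :=
    LinearMap.pi fun i => (Int.castAddHom (ZMod (m i))).toIntLinearMap.comp
      ((LinearMap.applyₗ (snf.bN i)))
  have hQ2 : ∀ (lam : Dual ℤ (LinearMap.range φ)) i,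
      Q2 lam i = ((lam (snf.bN i) : ℤ) : ZMod (m i)) := fun lam i => rfl
  have hsum : ∀ (k : Fin n → ℤ) (j : Fin n),
      (∑ i : Fin n, k i • snf.bN.coord i) (snf.bN j) = k j := by
    intro k j
    rw [LinearMap.sum_apply]
    simp only [LinearMap.smul_apply, Basis.coord_apply, Basis.repr_self, smul_eq_mul]
    rw [Finset.sum_eq_single j]
    · simp
    · intro b _ hb
      simp [Finsupp.single_apply, (Ne.symm hb : j ≠ b)]
    · intro h
      exact absurd (Finset.mem_univ j) h
  have hsurj2 : Function.Surjective Q2 := by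
    intro y
    have h := fun i => ZMod.intCast_surjective (n := m i) (y i)
    choose k hk using h
    refine ⟨∑ i : Fin n, k i • snf.bN.coord i, ?_⟩
    funext j
    rw [hQ2, hsum]
    exact hk j
  have hker2 : LinearMap.range Tι = LinearMap.ker Q2 := by
    apply le_antisymm
    · rintro _ ⟨μ, rfl⟩
      rw [LinearMap.mem_ker]
      funext i
      simp only [Pi.zero_apply]
      rw [hQ2, hTιapp]
      have h1 : ((snf.bN i : M₂)) = snf.a i • snf.bM (snf.f i) := snf.snf i
      rw [h1, map_smul, smul_eq_mul]
      rw [ZMod.intCast_zmod_eq_zero_iff_dvd, Int.natAbs_dvd]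
      exact Dvd.intro _ rfl
    · intro lam hlam
      rw [LinearMap.mem_ker] at hlam
      have hdvd : ∀ i, snf.a i ∣ lam (snf.bN i) := by
        intro i
        have := congrFun hlam i
        rw [hQ2, Pi.zero_apply, ZMod.intCast_zmod_eq_zero_iff_dvd, Int.natAbs_dvd] at this
        exact this
      choose c hc using hdvd
      refine ⟨∑ i : Fin n, c i • snf.bM.coord (snf.f i), ?_⟩
      apply snf.bN.ext
      intro j
      rw [hTιapp]
      have h1 : ((snf.bN j : M₂)) = snf.a j • snf.bM (snf.f j) := snf.snf j
      rw [h1, map_smul, smul_eq_mul]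
      have h2 : (∑ i : Fin n, c i • snf.bM.coord (snf.f i)) (snf.bM (snf.f j)) = c j := by
        rw [LinearMap.sum_apply]
        simp only [LinearMap.smul_apply, Basis.coord_apply, Basis.repr_self, smul_eq_mul]
        rw [Finset.sum_eq_single j]
        · simp
        · intro b _ hb
          have hfjb : snf.f j ≠ snf.f b := fun h => hb ((snf.f.injective h).symm)
          simp [Finsupp.single_apply, hfjb]
        · intro h
          exact absurd (Finset.mem_univ j) h
      rw [h2, ← hc j]
  let e5 : (Dual ℤ (LinearMap.range φ) ⧸ LinearMap.range Tι) ≃ₗ[ℤ]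
      ((i : Fin n) → ZMod (m i)) :=
    (Submodule.quotEquivOfEq _ _ hker2).trans (Q2.quotKerEquivOfSurjective hsurj2)
  obtain ⟨e6⟩ := tors_pi_zmod m
  have hall : ∀ i : Fin n, m i ≠ 0 := fun i => Int.natAbs_ne_zero.mpr (snf_a_ne_zero snf i)
  let e7 := piZModReindex (fun s : {i : Fin n // m i ≠ 0} => m s.1)
    (Equiv.subtypeUnivEquiv hall).symm
  let e8 : ((k : Fin n) → ZMod (m (((Equiv.subtypeUnivEquiv hall).symm k) : Fin n))) ≃+
      ((i : Fin n) → ZMod (m i)) := piZModCongr (fun i => rfl)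
  exact ⟨E1.trans (((torsCongr e5.toAddEquiv).trans e6).trans (e7.trans e8))⟩

end Stmt7Aux

/-- Let `φ : M₁ → M₂` be a homomorphism of finitely generated free `ℤ`-modules with dual
`φ^∨ : Hom(M₂,ℤ) → Hom(M₁,ℤ)`. Then `Tors coker(φ) ≅ Hom_ℤ(Tors coker(φ^∨), ℚ/ℤ)`. -/
theorem stmt_7 (M₁ M₂ : Type) [AddCommGroup M₁] [AddCommGroup M₂]
    [Module ℤ M₁] [Module ℤ M₂]
    [Module.Free ℤ M₁] [Module.Finite ℤ M₁]
    [Module.Free ℤ M₂] [Module.Finite ℤ M₂]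
    (φ : M₁ →ₗ[ℤ] M₂) :
    Nonempty
      ((Submodule.torsion ℤ (M₂ ⧸ LinearMap.range φ)) ≃+
        ((Submodule.torsion ℤ
            (Module.Dual ℤ M₁ ⧸ LinearMap.range (Module.Dual.transpose φ))) →+
          AddCircle (1 : ℚ))) := by
  classical
  rename_i i1 i2 i3 i4 i5 i6 i7 i8
  have h3 : i3 = AddCommGroup.toIntModule M₁ := @Subsingleton.elim _
    (@Unique.instSubsingleton _ AddCommGroup.uniqueIntModule) _ _
  subst h3
  have h4 : i4 = AddCommGroup.toIntModule M₂ := @Subsingleton.elim _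
    (@Unique.instSubsingleton _ AddCommGroup.uniqueIntModule) _ _
  subst h4
  obtain ⟨n, snf⟩ := (LinearMap.range φ).smithNormalForm (Module.Free.chooseBasis ℤ M₂)
  obtain ⟨e₁⟩ := quot_snf_equiv snf
  obtain ⟨e₂⟩ := side2 φ snf
  haveI : ∀ i : Fin n, NeZero (snf.a i).natAbs :=
    fun i => ⟨Int.natAbs_ne_zero.mpr (snf_a_ne_zero snf i)⟩
  obtain ⟨e₃⟩ := charEquiv ((i : Fin n) → ZMod (snf.a i).natAbs)
  exact ⟨e₁.trans (e₃.trans (AddEquiv.addMonoidHomCongrLeft e₂.symm))⟩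
end

section
/- Let m ≥ 2, n = 2d, and let J = [[j_0,k_0],...,[j_d,k_d]] be a partition of {0,...,n+1} into pairs with j_i < k_i and j_0 < ... < j_d. In the ring R_J := Z[t_1,...,t_{n+1}]/(t_1^m−1,...,t_{n+1}^m−1, t_{j_1}t_{k_1}−1,...,t_{j_d}t_{k_d}−1) (where t_0 := (t_1···t_{n+1})^{-1} and automatically t_{j_0}t_{k_0} = 1), the natural map from Z[t_{k_0},...,t_{k_d}]/(t_{k_0}^m−1,...,t_{k_d}^m−1) is an isomorphism; in particular R_J is a free Z-module of rank m^{d+1}. -/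
open MvPolynomial

noncomputable section


private def QI (m s : ℕ) : Ideal (MvPolynomial (Fin s) ℤ) :=
  Ideal.span (Set.range fun i : Fin s => (X i : MvPolynomial (Fin s) ℤ) ^ m - 1)

set_option maxHeartbeats 1000000 in
private lemma basisQ (m : ℕ) (hm : m ≠ 0) :
    ∀ s : ℕ, Nonempty (Module.Basis (Fin (m ^ s)) ℤ (MvPolynomial (Fin s) ℤ ⧸ QI m s)) := by
  intro s
  induction s with
  | zero =>
    have h0 : QI m 0 = ⊥ := by
      simp [QI, Set.range_eq_empty, Ideal.span_empty]
    let e1 : (MvPolynomial (Fin 0) ℤ ⧸ QI m 0) ≃+* MvPolynomial (Fin 0) ℤ :=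
      (Ideal.quotEquivOfEq h0).trans (RingEquiv.quotientBot _)
    let e2 : (MvPolynomial (Fin 0) ℤ ⧸ QI m 0) ≃+* ℤ := e1.trans (isEmptyRingEquiv ℤ (Fin 0))
    exact ⟨(Module.Basis.singleton (Fin 1) ℤ |>.map
      (e2.toAddEquiv.toIntLinearEquiv.symm)).reindex (finCongr (by simp))⟩
  | succ s ih =>
    obtain ⟨bQ⟩ := ih
    let e : MvPolynomial (Fin (s + 1)) ℤ ≃+* Polynomial (MvPolynomial (Fin s) ℤ) :=
      (finSuccEquiv ℤ s).toRingEquiv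
    let f : Polynomial (MvPolynomial (Fin s) ℤ) := Polynomial.X ^ m - 1
    have himg : ((e : MvPolynomial (Fin (s+1)) ℤ →+* Polynomial (MvPolynomial (Fin s) ℤ)) ''
          Set.range fun i : Fin (s+1) => (X i : MvPolynomial (Fin (s+1)) ℤ) ^ m - 1)
        = (⇑(Polynomial.C (R := MvPolynomial (Fin s) ℤ)) ''
            Set.range fun i : Fin s => (X i : MvPolynomial (Fin s) ℤ) ^ m - 1) ∪ {f} := by
      ext x
      constructor
      · rintro ⟨-, ⟨i, rfl⟩, rfl⟩
        induction i using Fin.cases with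
        | zero =>
          right
          simp [e, f, map_sub, map_pow, finSuccEquiv_X_zero]
        | succ i' =>
          left
          exact ⟨X i' ^ m - 1, ⟨i', rfl⟩, by simp [e, map_sub, map_pow, finSuccEquiv_X_succ]⟩
      · rintro (⟨-, ⟨i, rfl⟩, rfl⟩ | rfl)
        · exact ⟨X i.succ ^ m - 1, ⟨i.succ, rfl⟩,
            by simp [e, map_sub, map_pow, finSuccEquiv_X_succ]⟩
        · exact ⟨X 0 ^ m - 1, ⟨0, rfl⟩, by simp [e, f, map_sub, map_pow, finSuccEquiv_X_zero]⟩
    have hmap : (QI m (s+1)).map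
          (e : MvPolynomial (Fin (s+1)) ℤ →+* Polynomial (MvPolynomial (Fin s) ℤ))
        = (QI m s).map (Polynomial.C) ⊔ Ideal.span {f} := by
      rw [QI, Ideal.map_span, himg, Ideal.span_union, QI, Ideal.map_span]
    let E1 := Ideal.quotientEquiv (QI m (s+1)) ((QI m s).map Polynomial.C ⊔ Ideal.span {f})
      e hmap.symm
    let E2 := (DoubleQuot.quotQuotEquivQuotSup ((QI m s).map Polynomial.C)
      (Ideal.span {f})).symm
    haveI h3 : (Ideal.span {Ideal.Quotient.mk ((QI m s).map Polynomial.C) f}).IsTwoSided :=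
      @Ideal.instIsTwoSided_1 _ (Ideal.Quotient.commRing _) _
    haveI h5 : (Ideal.span {f.map (Ideal.Quotient.mk (QI m s))}).IsTwoSided :=
      @Ideal.instIsTwoSided_1 _ Polynomial.commRing _
    let E3 := Ideal.quotEquivOfEq (I := (Ideal.span {f}).map
        (Ideal.Quotient.mk ((QI m s).map Polynomial.C)))
      (J := Ideal.span {Ideal.Quotient.mk ((QI m s).map Polynomial.C) f})
      (by rw [Ideal.map_span, Set.image_singleton])
    let E4 := (AdjoinRoot.Polynomial.quotQuotEquivComm (QI m s) f).symm
    have hfbar : f.map (Ideal.Quotient.mk (QI m s)) =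
        (Polynomial.X ^ m - 1 : Polynomial (MvPolynomial (Fin s) ℤ ⧸ QI m s)) := by
      simp [f, Polynomial.map_sub, Polynomial.map_pow, Polynomial.map_X, Polynomial.map_one]
    haveI h6 : (Ideal.span {(Polynomial.X ^ m - 1 :
        Polynomial (MvPolynomial (Fin s) ℤ ⧸ QI m s))}).IsTwoSided :=
      @Ideal.instIsTwoSided_1 _ Polynomial.commRing _
    let E5 := Ideal.quotEquivOfEq
      (I := Ideal.span {f.map (Ideal.Quotient.mk (QI m s))})
      (J := Ideal.span {(Polynomial.X ^ m - 1 :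
          Polynomial (MvPolynomial (Fin s) ℤ ⧸ QI m s))})
      (by rw [hfbar])
    let E : (MvPolynomial (Fin (s+1)) ℤ ⧸ QI m (s+1)) ≃+*
        AdjoinRoot (Polynomial.X ^ m - 1 :
          Polynomial (MvPolynomial (Fin s) ℤ ⧸ QI m s)) :=
      (((E1.trans E2).trans E3).trans E4).trans E5
    -- nontriviality of the quotient
    have hker : QI m s ≤ RingHom.ker ((aeval (fun _ : Fin s => (1 : ℤ))).toRingHom) := by
      refine Ideal.span_le.mpr ?_
      rintro x ⟨i, rfl⟩
      simp [RingHom.mem_ker]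
    let π : (MvPolynomial (Fin s) ℤ ⧸ QI m s) →+* ℤ :=
      Ideal.Quotient.lift (QI m s) ((aeval (fun _ : Fin s => (1 : ℤ))).toRingHom)
        (fun a ha => hker ha)
    haveI : Nontrivial (MvPolynomial (Fin s) ℤ ⧸ QI m s) := π.domain_nontrivial
    have hmonic : (Polynomial.X ^ m - 1 :
        Polynomial (MvPolynomial (Fin s) ℤ ⧸ QI m s)).Monic := by
      simpa using Polynomial.monic_X_pow_sub_C
        (1 : MvPolynomial (Fin s) ℤ ⧸ QI m s) hm
    have hdim : (Polynomial.X ^ m - 1 :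
        Polynomial (MvPolynomial (Fin s) ℤ ⧸ QI m s)).natDegree = m := by
      simpa using (Polynomial.natDegree_X_pow_sub_C (n := m)
        (r := (1 : MvPolynomial (Fin s) ℤ ⧸ QI m s)))
    let bA := (AdjoinRoot.powerBasis' hmonic).basis.reindex (finCongr hdim)
    let bT := bQ.smulTower bA
    exact ⟨(bT.map (E.symm.toAddEquiv.toIntLinearEquiv)).reindex
      ((finProdFinEquiv).trans (finCongr (by rw [pow_succ])))⟩



set_option maxHeartbeats 2000000 in
private theorem stmt_18_iso (m d : ℕ) (hm : 2 ≤ m)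
    (j k : Fin (d + 1) → Fin (2 * d + 2))
    (hbij : Function.Bijective (Sum.elim j k))
    (I : Ideal (MvPolynomial (Fin (2 * d + 2)) ℤ))
    (hI : I = Ideal.span
      ((Set.range fun i : Fin (2 * d + 2) => (X i : MvPolynomial (Fin (2 * d + 2)) ℤ) ^ m - 1) ∪
        {(∏ i, X i) - 1} ∪
        {x | ∃ ν : Fin (d + 1), ν ≠ 0 ∧ x = X (j ν) * X (k ν) - 1}))
    (I' : Ideal (MvPolynomial (Fin (d + 1)) ℤ))
    (hI' : I' = Ideal.span
      (Set.range fun i : Fin (d + 1) => (X i : MvPolynomial (Fin (d + 1)) ℤ) ^ m - 1)) :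
    (∃ g : (MvPolynomial (Fin (d + 1)) ℤ ⧸ I') →+* (MvPolynomial (Fin (2 * d + 2)) ℤ ⧸ I),
      (∀ i : Fin (d + 1), g (Ideal.Quotient.mk I' (X i)) = Ideal.Quotient.mk I (X (k i))) ∧
      Function.Bijective g) := by
  have hm1 : 1 ≤ m := le_trans one_le_two hm
  -- generators
  have hgen1 : ∀ r : Fin (2 * d + 2),
      ((X r : MvPolynomial (Fin (2 * d + 2)) ℤ) ^ m - 1) ∈ I := by
    intro r; rw [hI]; exact Ideal.subset_span (Or.inl (Or.inl ⟨r, rfl⟩))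
  have hgen2 : ((∏ i, X i : MvPolynomial (Fin (2 * d + 2)) ℤ) - 1) ∈ I := by
    rw [hI]; exact Ideal.subset_span (Or.inl (Or.inr rfl))
  have hgen3 : ∀ ν : Fin (d + 1), ν ≠ 0 →
      ((X (j ν) * X (k ν) : MvPolynomial (Fin (2 * d + 2)) ℤ) - 1) ∈ I := by
    intro ν hν; rw [hI]; exact Ideal.subset_span (Or.inr ⟨ν, hν, rfl⟩)
  have hgen' : ∀ i : Fin (d + 1),
      ((X i : MvPolynomial (Fin (d + 1)) ℤ) ^ m - 1) ∈ I' := by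
    intro i; rw [hI']; exact Ideal.subset_span ⟨i, rfl⟩
  set w : Fin (2 * d + 2) → (MvPolynomial (Fin (2 * d + 2)) ℤ ⧸ I) :=
    fun r => Ideal.Quotient.mk I (X r) with hwdef
  set u : Fin (d + 1) → (MvPolynomial (Fin (d + 1)) ℤ ⧸ I') :=
    fun ν => Ideal.Quotient.mk I' (X ν) with hudef
  have hw : ∀ r, w r ^ m = 1 := by
    intro r
    have := Ideal.Quotient.eq_zero_iff_mem.mpr (hgen1 r)
    rw [map_sub, map_pow, map_one, sub_eq_zero] at this
    simpa [hwdef] using this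
  have hu : ∀ ν, u ν ^ m = 1 := by
    intro ν
    have := Ideal.Quotient.eq_zero_iff_mem.mpr (hgen' ν)
    rw [map_sub, map_pow, map_one, sub_eq_zero] at this
    simpa [hudef] using this
  have hu1 : ∀ ν, u ν ^ (m - 1) * u ν = 1 := by
    intro ν; rw [← pow_succ, Nat.sub_add_cancel hm1, hu]
  have hw1 : ∀ r, w r ^ (m - 1) * w r = 1 := by
    intro r; rw [← pow_succ, Nat.sub_add_cancel hm1, hw]
  -- the equivalence indexing the pairs
  let σ : (Fin (d + 1) ⊕ Fin (d + 1)) ≃ Fin (2 * d + 2) := Equiv.ofBijective _ hbij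
  have hσj : ∀ ν, σ (Sum.inl ν) = j ν := fun _ => rfl
  have hσk : ∀ ν, σ (Sum.inr ν) = k ν := fun _ => rfl
  have hsymmj : ∀ ν, σ.symm (j ν) = Sum.inl ν := fun ν => σ.symm_apply_eq.mpr rfl
  have hsymmk : ∀ ν, σ.symm (k ν) = Sum.inr ν := fun ν => σ.symm_apply_eq.mpr rfl
  -- forward hom
  let G0 := (aeval (R := ℤ) fun i : Fin (d + 1) => Ideal.Quotient.mk I (X (k i))).toRingHom
  have hG : ∀ a ∈ I', G0 a = 0 := by
    intro a ha
    refine (show I' ≤ RingHom.ker G0 from ?_) ha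
    rw [hI']
    refine Ideal.span_le.mpr ?_
    rintro x ⟨i, rfl⟩
    have : G0 (X i ^ m - 1) = w (k i) ^ m - 1 := by
      simp [G0, map_sub, map_pow, aeval_X, hwdef]
    simp only [RingHom.mem_ker, SetLike.mem_coe]
    rw [this, hw, sub_self]
  let g := Ideal.Quotient.lift I' G0 hG
  -- backward hom
  let vfun : Fin (2 * d + 2) → (MvPolynomial (Fin (d + 1)) ℤ ⧸ I') :=
    fun r => Sum.elim (fun ν => u ν ^ (m - 1)) u (σ.symm r)
  let F0 := (aeval (R := ℤ) vfun).toRingHom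
  have hvm : ∀ r, vfun r ^ m = 1 := by
    intro r
    rcases hsr : σ.symm r with ν | ν <;> simp only [vfun, hsr, Sum.elim_inl, Sum.elim_inr]
    · rw [← pow_mul, mul_comm, pow_mul, hu, one_pow]
    · exact hu ν
  have hF : ∀ a ∈ I, F0 a = 0 := by
    intro a ha
    refine (show I ≤ RingHom.ker F0 from ?_) ha
    rw [hI]
    refine Ideal.span_le.mpr ?_
    rintro x ((⟨r, rfl⟩ | rfl) | ⟨ν, hν, rfl⟩) <;>
      simp only [RingHom.mem_ker, SetLike.mem_coe, map_sub, map_pow, map_one, map_prod, map_mul]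
    · rw [show F0 (X r) = vfun r from aeval_X _ _, hvm, sub_self]
    · have : (∏ r, F0 (X r)) = ∏ r, vfun r := by
        refine Finset.prod_congr rfl fun r _ => aeval_X _ _
      rw [this]
      have hprod : (∏ r, vfun r) = 1 := by
        calc (∏ r, vfun r) = ∏ x : Fin (d+1) ⊕ Fin (d+1), vfun (σ x) :=
              (Equiv.prod_comp σ vfun).symm
        _ = (∏ ν, u ν ^ (m - 1)) * ∏ ν, u ν := by
              rw [Fintype.prod_sum_type]
              congr 1 <;> exact Finset.prod_congr rfl fun ν _ => by
                simp [vfun, Equiv.symm_apply_apply]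
        _ = ∏ ν, (u ν ^ (m - 1) * u ν) := Finset.prod_mul_distrib.symm
        _ = 1 := by
              rw [Finset.prod_eq_one]
              intro ν _; exact hu1 ν
      rw [hprod, sub_self]
    · rw [show F0 (X (j ν)) = vfun (j ν) from aeval_X _ _,
        show F0 (X (k ν)) = vfun (k ν) from aeval_X _ _]
      have h1 : vfun (j ν) = u ν ^ (m - 1) := by simp [vfun, hsymmj]
      have h2 : vfun (k ν) = u ν := by simp [vfun, hsymmk]
      rw [h1, h2, hu1, sub_self]
  let f := Ideal.Quotient.lift I F0 hF
  -- pair relations in the big quotient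
  have hpair_ne : ∀ ν : Fin (d + 1), ν ≠ 0 → w (j ν) * w (k ν) = 1 := by
    intro ν hν
    have := Ideal.Quotient.eq_zero_iff_mem.mpr (hgen3 ν hν)
    rw [map_sub, map_mul, map_one, sub_eq_zero] at this
    simpa [hwdef] using this
  have hpair : ∀ ν : Fin (d + 1), w (j ν) * w (k ν) = 1 := by
    have hprodw : (∏ r, w r) = 1 := by
      have := Ideal.Quotient.eq_zero_iff_mem.mpr hgen2
      rw [map_sub, map_one, sub_eq_zero, map_prod] at this
      simpa [hwdef] using this
    have hsplit : (∏ ν, (w (j ν) * w (k ν))) = 1 := by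
      calc (∏ ν, (w (j ν) * w (k ν))) = (∏ ν, w (j ν)) * ∏ ν, w (k ν) :=
            Finset.prod_mul_distrib
      _ = ∏ x : Fin (d+1) ⊕ Fin (d+1), w (σ x) := by exact (Fintype.prod_sum_type (fun x => w (σ x))).symm
      _ = ∏ r, w r := Equiv.prod_comp σ w
      _ = 1 := hprodw
    intro ν
    by_cases hν : ν = 0
    · subst hν
      have := Fintype.prod_eq_single (0 : Fin (d + 1))
        (f := fun ν => w (j ν) * w (k ν)) (fun ν hν => hpair_ne ν hν)
      rw [this] at hsplit
      exact hsplit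
    · exact hpair_ne ν hν
  have hjw : ∀ ν, w (j ν) = w (k ν) ^ (m - 1) := by
    intro ν
    calc w (j ν) = w (j ν) * (w (k ν) ^ (m - 1) * w (k ν)) := by rw [hw1, mul_one]
    _ = (w (j ν) * w (k ν)) * w (k ν) ^ (m - 1) := by ring
    _ = w (k ν) ^ (m - 1) := by rw [hpair, one_mul]
  -- g on generators
  have hgX : ∀ i, g (Ideal.Quotient.mk I' (X i)) = Ideal.Quotient.mk I (X (k i)) := by
    intro i
    simp [g, Ideal.Quotient.lift_mk, G0, aeval_X]
  have hfX : ∀ r, f (Ideal.Quotient.mk I (X r)) = vfun r := by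
    intro r
    simp [f, Ideal.Quotient.lift_mk, F0, aeval_X]
  -- compositions
  have hfg : f.comp g = RingHom.id _ := by
    refine Ideal.Quotient.ringHom_ext ?_
    refine MvPolynomial.ringHom_ext (fun r => ?_) (fun i => ?_)
    · rw [show (C r : MvPolynomial (Fin (d + 1)) ℤ) = (r : MvPolynomial (Fin (d + 1)) ℤ)
        from eq_intCast _ r]
      simp only [RingHom.coe_comp, Function.comp_apply, map_intCast]
    · simp only [RingHom.coe_comp, Function.comp_apply, RingHom.id_apply]
      rw [hgX, hfX]
      simp [vfun, hsymmk, hudef]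
  have hgf : g.comp f = RingHom.id _ := by
    refine Ideal.Quotient.ringHom_ext ?_
    refine MvPolynomial.ringHom_ext (fun r => ?_) (fun r => ?_)
    · rw [show (C r : MvPolynomial (Fin (2 * d + 2)) ℤ) = (r : MvPolynomial (Fin (2 * d + 2)) ℤ)
        from eq_intCast _ r]
      simp only [RingHom.coe_comp, Function.comp_apply, map_intCast]
    · simp only [RingHom.coe_comp, Function.comp_apply, RingHom.id_apply]
      rw [hfX]
      rcases hsr : σ.symm r with ν | ν
      · have hr : r = j ν := by
          have := congrArg σ hsr
          rw [Equiv.apply_symm_apply] at this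
          exact this
        subst hr
        simp only [vfun, hsr, Sum.elim_inl]
        rw [map_pow, show g (u ν) = w (k ν) from hgX ν, ← hjw]
      · have hr : r = k ν := by
          have := congrArg σ hsr
          rw [Equiv.apply_symm_apply] at this
          exact this
        subst hr
        simp only [vfun, hsr, Sum.elim_inr]
        exact hgX ν
  refine ⟨g, hgX, Function.bijective_iff_has_inverse.mpr
    ⟨f, fun x => ?_, fun x => ?_⟩⟩
  · exact RingHom.congr_fun hfg x
  · exact RingHom.congr_fun hgf x



/-- For a partition `J` of `{0,…,n+1}` into pairs, `R_J` is as claimed. -/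
theorem stmt_18 (m d : ℕ) (hm : 2 ≤ m)
    (j k : Fin (d + 1) → Fin (2 * d + 2))
    (hjk : ∀ i, j i < k i) (hj : StrictMono j)
    (hbij : Function.Bijective (Sum.elim j k))
    (I : Ideal (MvPolynomial (Fin (2 * d + 2)) ℤ))
    (hI : I = Ideal.span
      ((Set.range fun i : Fin (2 * d + 2) => (X i : MvPolynomial (Fin (2 * d + 2)) ℤ) ^ m - 1) ∪
        {(∏ i, X i) - 1} ∪
        {x | ∃ ν : Fin (d + 1), ν ≠ 0 ∧ x = X (j ν) * X (k ν) - 1}))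
    (I' : Ideal (MvPolynomial (Fin (d + 1)) ℤ))
    (hI' : I' = Ideal.span
      (Set.range fun i : Fin (d + 1) => (X i : MvPolynomial (Fin (d + 1)) ℤ) ^ m - 1)) :
    (∃ g : (MvPolynomial (Fin (d + 1)) ℤ ⧸ I') →+* (MvPolynomial (Fin (2 * d + 2)) ℤ ⧸ I),
      (∀ i : Fin (d + 1), g (Ideal.Quotient.mk I' (X i)) = Ideal.Quotient.mk I (X (k i))) ∧
      Function.Bijective g) ∧
    Module.Free ℤ (MvPolynomial (Fin (2 * d + 2)) ℤ ⧸ I) ∧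
    Module.finrank ℤ (MvPolynomial (Fin (2 * d + 2)) ℤ ⧸ I) = m ^ (d + 1) := by
  obtain ⟨g, hgX, hgbij⟩ := stmt_18_iso m d hm j k hbij I hI I' hI'
  have hIQ : I' = QI m (d + 1) := hI'
  obtain ⟨b⟩ := basisQ m (by omega) (d + 1)
  let eq1 : (MvPolynomial (Fin (d + 1)) ℤ ⧸ QI m (d + 1)) ≃+*
      (MvPolynomial (Fin (d + 1)) ℤ ⧸ I') := Ideal.quotEquivOfEq hIQ.symm
  let eq2 : (MvPolynomial (Fin (d + 1)) ℤ ⧸ I') ≃+*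
      (MvPolynomial (Fin (2 * d + 2)) ℤ ⧸ I) := RingEquiv.ofBijective g hgbij
  let L : (MvPolynomial (Fin (d + 1)) ℤ ⧸ QI m (d + 1)) ≃ₗ[ℤ]
      (MvPolynomial (Fin (2 * d + 2)) ℤ ⧸ I) := (eq1.trans eq2).toAddEquiv.toIntLinearEquiv
  let bQbig := b.map L
  refine ⟨⟨g, hgX, hgbij⟩, Module.Free.of_basis bQbig, ?_⟩
  rw [Module.finrank_eq_card_basis bQbig, Fintype.card_fin]

end
end
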